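/- arXiv:math/0605051 — 6 statements merged into one kernel-verified Lean document; each statement's English description precedes it below -/
import Mathlib

section
/- The supremum over portfolios h in H of RAROC equals 1/λ*, where λ* = sup{λ > 0 : E(λ) ∩ D ≠ ∅}, E(λ) = S₀ - λ(E - S₀). Moreover the set of maximizers equals N = {h ∈ H : ∃ a ∈ ℝ, ∀ x ∈ E(λ*), ∀ y ∈ D, ⟨h,x⟩ ≤ a ≤ ⟨h,y⟩, and ∀ y in the relative interior of D, ⟨h,y⟩ > a}. -/
open Set Matrix
open scoped Pointwise


variable {d : ℕ}

private lemma dot_cont (h : Fin d → ℝ) : Continuous fun x : Fin d → ℝ => h ⬝ᵥ x := by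
  unfold dotProduct
  exact continuous_finset_sum _ fun i _ => continuous_const.mul (continuous_apply i)

private lemma clm_dot (g : (Fin d → ℝ) →L[ℝ] ℝ) (x : Fin d → ℝ) :
    (fun i => g ((Pi.single i 1 : Fin d → ℝ))) ⬝ᵥ x = g x := by
  have hx : x = ∑ i, x i • (Pi.single i 1 : Fin d → ℝ) := by
    have := Finset.univ_sum_single x
    rw [← this]
    congr 1
    funext i
    ext j
    by_cases hij : i = j <;> simp [Pi.single_apply, hij]
  conv_rhs => rw [hx]
  rw [map_sum]
  unfold dotProduct
  congr 1
  funext i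
  rw [g.map_smul]
  simp [mul_comm]

private lemma relint_ray {s : Set (Fin d → ℝ)} {y : Fin d → ℝ}
    (hy : y ∈ intrinsicInterior ℝ s) {p q : Fin d → ℝ} (hp : p ∈ s) (hq : q ∈ s) :
    ∃ t : ℝ, 0 < t ∧ y + t • (p - q) ∈ s := by
  obtain ⟨yy, hyy, rfl⟩ := hy
  have hv : p - q ∈ (affineSpan ℝ s).direction :=
    AffineSubspace.vsub_mem_direction (subset_affineSpan ℝ s hp) (subset_affineSpan ℝ s hq)
  have hmem : ∀ t : ℝ, t • (p - q) + (yy : Fin d → ℝ) ∈ affineSpan ℝ s := fun t =>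
    AffineSubspace.vadd_mem_of_mem_direction (Submodule.smul_mem _ t hv) yy.2
  set c : ℝ → affineSpan ℝ s := fun t => ⟨t • (p - q) + (yy : Fin d → ℝ), hmem t⟩ with hc
  have hcont : Continuous c := by
    apply Continuous.subtype_mk
    exact (continuous_id.smul continuous_const).add continuous_const
  have hc0 : c 0 = yy := by
    apply Subtype.ext
    simp [hc]
  have hopen : IsOpen (c ⁻¹' interior ((↑) ⁻¹' s : Set (affineSpan ℝ s))) :=
    isOpen_interior.preimage hcont
  have h0 : (0 : ℝ) ∈ c ⁻¹' interior ((↑) ⁻¹' s : Set (affineSpan ℝ s)) := by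
    simp only [Set.mem_preimage, hc0]; exact hyy
  obtain ⟨ε, hε, hball⟩ := Metric.isOpen_iff.1 hopen 0 h0
  refine ⟨ε / 2, by positivity, ?_⟩
  have : c (ε / 2) ∈ interior ((↑) ⁻¹' s : Set (affineSpan ℝ s)) := by
    apply hball
    simp only [Metric.mem_ball, Real.dist_eq, sub_zero]
    rw [abs_of_pos (by positivity)]
    linarith
  have := interior_subset this
  simpa [hc, add_comm] using this

private lemma relint_min_const {s : Set (Fin d → ℝ)} {h y : Fin d → ℝ}
    (hy : y ∈ intrinsicInterior ℝ s) (hmin : ∀ z ∈ s, h ⬝ᵥ y ≤ h ⬝ᵥ z) :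
    ∀ z ∈ s, h ⬝ᵥ z = h ⬝ᵥ y := by
  intro z hz
  obtain ⟨t, ht, hmem⟩ := relint_ray hy (intrinsicInterior_subset hy) hz
  have h1 := hmin _ hmem
  rw [dotProduct_add, dotProduct_smul, dotProduct_sub, smul_eq_mul] at h1
  have h2 : h ⬝ᵥ z ≤ h ⬝ᵥ y := by nlinarith
  exact le_antisymm h2 (hmin z hz)

private lemma mem_of_dual_dual {H : Set (Fin d → ℝ)} (hcl : IsClosed H) (hconv : Convex ℝ H)
    (hcone : ∀ c : ℝ, 0 ≤ c → ∀ h ∈ H, c • h ∈ H) (h0 : (0 : Fin d → ℝ) ∈ H)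
    {v : Fin d → ℝ} (hv : ∀ k, (∀ h' ∈ H, 0 ≤ h' ⬝ᵥ k) → 0 ≤ v ⬝ᵥ k) : v ∈ H := by
  by_contra hvH
  obtain ⟨f, u, hfH, hfv⟩ := geometric_hahn_banach_closed_point hconv hcl hvH
  have hu0 : 0 < u := by simpa using hfH 0 h0
  set k : Fin d → ℝ := fun i => -(f ((Pi.single i 1 : Fin d → ℝ))) with hk
  have hkdot : ∀ x, x ⬝ᵥ k = -(f x) := by
    intro x
    have := clm_dot f x
    rw [dotProduct_comm] at this
    rw [show x ⬝ᵥ k = -(x ⬝ᵥ fun i => f ((Pi.single i 1 : Fin d → ℝ))) by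
      simp [hk, dotProduct, Finset.sum_neg_distrib, mul_neg], this]
  have hkH : ∀ h' ∈ H, 0 ≤ h' ⬝ᵥ k := by
    intro h' hh'
    rw [hkdot]
    -- show f h' ≤ 0
    by_contra hpos
    push_neg at hpos
    have hpos' : 0 < f h' := by linarith
    have hcu := hfH (((u + 1) / f h') • h') (hcone _ (by positivity) h' hh')
    rw [f.map_smul, smul_eq_mul, div_mul_cancel₀ _ (ne_of_gt hpos')] at hcu
    linarith
  have := hv k hkH
  rw [hkdot] at this
  linarith

set_option maxHeartbeats 1000000 in
/-- Agent-independent optimization (static model): the supremum of RAROC over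
portfolios `h ∈ H` equals `λ*⁻¹`, and the set of maximizers equals `N`. -/
theorem stmt0 {d : ℕ} (E G H Hstar D : Set (Fin d → ℝ))
    (hEc : Convex ℝ E) (hEk : IsCompact E) (hEne : E.Nonempty)
    (hGc : Convex ℝ G) (hGk : IsCompact G)
    (hEG : E ⊆ G)
    (hHcl : IsClosed H) (hHconv : Convex ℝ H)
    (hHcone : ∀ c : ℝ, 0 ≤ c → ∀ h ∈ H, c • h ∈ H)
    (hHstar : Hstar = {x | ∀ h ∈ H, 0 ≤ h ⬝ᵥ x})
    (hD : D = G + Hstar)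
    (S₀ : Fin d → ℝ)
    (hS₀D : S₀ ∈ intrinsicInterior ℝ D) (hS₀E : S₀ ∉ E)
    (RAROC : (Fin d → ℝ) → ℝ)
    (hRAROC : ∀ h, RAROC h =
      (sInf {r | ∃ x ∈ E, r = h ⬝ᵥ (x - S₀)}) /
        (-(sInf {r | ∃ x ∈ D, r = h ⬝ᵥ (x - S₀)})))
    (Elam : ℝ → Set (Fin d → ℝ))
    (hElam : ∀ l, Elam l = (fun x => S₀ - l • (x - S₀)) '' E)
    (lamStar : ℝ)
    (hlam : IsLUB {l : ℝ | 0 < l ∧ (Elam l ∩ D).Nonempty} lamStar)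
    (N : Set (Fin d → ℝ))
    (hN : N = {h ∈ H | ∃ a : ℝ,
      (∀ x ∈ Elam lamStar, h ⬝ᵥ x ≤ a) ∧ (∀ y ∈ D, a ≤ h ⬝ᵥ y) ∧
      ∀ y ∈ intrinsicInterior ℝ D, a < h ⬝ᵥ y}) :
    IsGreatest (RAROC '' H) lamStar⁻¹ ∧
      {h ∈ H | RAROC h = lamStar⁻¹} = N := by
  -- basic facts about Hstar
  have hstar0 : (0 : Fin d → ℝ) ∈ Hstar := by
    rw [hHstar]; intro h _; simp
  have hstarMem : ∀ k ∈ Hstar, ∀ h ∈ H, 0 ≤ h ⬝ᵥ k := by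
    intro k hk h hh; rw [hHstar] at hk; exact hk h hh
  have hGne : G.Nonempty := ⟨hEne.choose, hEG hEne.choose_spec⟩
  have hGD : G ⊆ D := by
    intro g hg
    have := Set.add_mem_add hg hstar0
    rw [← hD] at *
    simpa using this
  have hED : E ⊆ D := fun e he => hGD (hEG he)
  have hS₀D' : S₀ ∈ D := intrinsicInterior_subset hS₀D
  have hstarConv : Convex ℝ Hstar := by
    intro x hx y hy a b ha hb hab
    rw [hHstar] at hx hy ⊢
    intro h hh
    rw [dotProduct_add, dotProduct_smul, dotProduct_smul, smul_eq_mul, smul_eq_mul]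
    have := hx h hh; have := hy h hh
    positivity
  have hDconv : Convex ℝ D := hD ▸ hGc.add hstarConv
  -- H is nonempty and contains 0
  have hHne : H.Nonempty := by
    by_contra hne
    rw [Set.not_nonempty_iff_eq_empty] at hne
    have hDuniv : D = Set.univ := by
      ext v
      simp only [Set.mem_univ, iff_true, hD]
      obtain ⟨g₀, hg₀⟩ := hGne
      have hv : v - g₀ ∈ Hstar := by rw [hHstar, hne]; intro h hh; exact absurd hh (by simp)
      have := Set.add_mem_add hg₀ hv
      simpa using this
    have hmem : max lamStar 0 + 1 ∈ {l : ℝ | 0 < l ∧ (Elam l ∩ D).Nonempty} := by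
      refine ⟨by positivity, ?_⟩
      rw [hDuniv, Set.inter_univ, hElam]
      exact hEne.image _
    have h1 := hlam.1 hmem
    have h2 : lamStar ≤ max lamStar 0 := le_max_left _ _
    linarith
  have h0H : (0 : Fin d → ℝ) ∈ H := by
    obtain ⟨h₀, hh₀⟩ := hHne
    simpa using hHcone 0 le_rfl h₀ hh₀
  -- the scaling set is nonempty, lamStar > 0
  have hSSne : {l : ℝ | 0 < l ∧ (Elam l ∩ D).Nonempty}.Nonempty := by
    by_contra hne
    rw [Set.not_nonempty_iff_eq_empty] at hne
    have : lamStar ≤ lamStar - 1 := by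
      apply hlam.2
      intro a ha
      rw [hne] at ha
      exact absurd ha (Set.notMem_empty a)
    linarith
  have lampos : 0 < lamStar := by
    obtain ⟨l, hl⟩ := hSSne
    exact lt_of_lt_of_le hl.1 (hlam.1 hl)
  -- boundedness of the infimum sets
  have hsetEne : ∀ h : Fin d → ℝ, {r | ∃ x ∈ E, r = h ⬝ᵥ (x - S₀)}.Nonempty :=
    fun h => ⟨_, hEne.choose, hEne.choose_spec, rfl⟩
  have hsetDne : ∀ h : Fin d → ℝ, {r | ∃ x ∈ D, r = h ⬝ᵥ (x - S₀)}.Nonempty :=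
    fun h => ⟨_, S₀, hS₀D', rfl⟩
  have hsetEbdd : ∀ h : Fin d → ℝ, BddBelow {r | ∃ x ∈ E, r = h ⬝ᵥ (x - S₀)} := by
    intro h
    obtain ⟨x₀, hx₀, hmin⟩ := hEk.exists_isMinOn hEne
      (((dot_cont h).comp (continuous_id.sub continuous_const)).continuousOn)
    exact ⟨h ⬝ᵥ (x₀ - S₀), by rintro r ⟨x, hx, rfl⟩; exact hmin hx⟩
  have hsetDbdd : ∀ h ∈ H, BddBelow {r | ∃ x ∈ D, r = h ⬝ᵥ (x - S₀)} := by
    intro h hh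
    obtain ⟨g₀, hg₀, hmin⟩ := hGk.exists_isMinOn hGne
      (((dot_cont h).comp (continuous_id.sub continuous_const)).continuousOn)
    refine ⟨h ⬝ᵥ (g₀ - S₀), ?_⟩
    rintro r ⟨x, hx, rfl⟩
    rw [hD, Set.mem_add] at hx
    obtain ⟨g, hg, k, hk, rfl⟩ := hx
    have h1 : h ⬝ᵥ (g + k - S₀) = h ⬝ᵥ (g - S₀) + h ⬝ᵥ k := by
      rw [show g + k - S₀ = (g - S₀) + k by abel, dotProduct_add]
    have h2 : (0:ℝ) ≤ h ⬝ᵥ k := hstarMem k hk h hh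
    have h3 := hmin hg
    simp only [Function.comp] at h3
    rw [h1]
    calc h ⬝ᵥ (g₀ - S₀) ≤ h ⬝ᵥ (g - S₀) := h3
    _ ≤ _ := by linarith
  have hsetD0 : ∀ h ∈ H, sInf {r | ∃ x ∈ D, r = h ⬝ᵥ (x - S₀)} ≤ 0 := by
    intro h hh
    have : (0:ℝ) ∈ {r | ∃ x ∈ D, r = h ⬝ᵥ (x - S₀)} := ⟨S₀, hS₀D', by simp⟩
    exact csInf_le (hsetDbdd h hh) this
  -- key inequality : lamStar * (inf over E) ≤ - (inf over D)
  have key : ∀ h ∈ H, lamStar * sInf {r | ∃ x ∈ E, r = h ⬝ᵥ (x - S₀)} ≤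
      -sInf {r | ∃ x ∈ D, r = h ⬝ᵥ (x - S₀)} := by
    intro h hh
    set α := sInf {r | ∃ x ∈ E, r = h ⬝ᵥ (x - S₀)} with hα
    set δ := sInf {r | ∃ x ∈ D, r = h ⬝ᵥ (x - S₀)} with hδ
    have hstep : ∀ l ∈ {l : ℝ | 0 < l ∧ (Elam l ∩ D).Nonempty}, l * α ≤ -δ := by
      rintro l ⟨hl, z, hzE, hzD⟩
      rw [hElam] at hzE
      obtain ⟨x, hx, rfl⟩ := hzE
      have h1 : δ ≤ h ⬝ᵥ (S₀ - l • (x - S₀) - S₀) := csInf_le (hsetDbdd h hh) ⟨_, hzD, rfl⟩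
      have h2 : α ≤ h ⬝ᵥ (x - S₀) := csInf_le (hsetEbdd h) ⟨x, hx, rfl⟩
      have h3 : h ⬝ᵥ (S₀ - l • (x - S₀) - S₀) = -(l * (h ⬝ᵥ (x - S₀))) := by
        rw [show S₀ - l • (x - S₀) - S₀ = -(l • (x - S₀)) by abel, dotProduct_neg,
          dotProduct_smul, smul_eq_mul]
      nlinarith [mul_le_mul_of_nonneg_left h2 hl.le]
    rcases le_or_gt α 0 with hc | hc
    · obtain ⟨l, hl⟩ := hSSne
      have h4 := hstep l hl
      have h5 := hlam.1 hl
      nlinarith [hl.1]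
    · have h6 : lamStar ≤ -δ / α := by
        apply hlam.2
        intro l hl
        exact (le_div_iff₀ hc).2 (hstep l hl)
      calc lamStar * α ≤ (-δ / α) * α := mul_le_mul_of_nonneg_right h6 hc.le
      _ = -δ := div_mul_cancel₀ _ (ne_of_gt hc)
  -- the upper bound
  have ub : ∀ h ∈ H, RAROC h ≤ lamStar⁻¹ := by
    intro h hh
    rw [hRAROC]
    set α := sInf {r | ∃ x ∈ E, r = h ⬝ᵥ (x - S₀)} with hα
    set δ := sInf {r | ∃ x ∈ D, r = h ⬝ᵥ (x - S₀)} with hδ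
    have hβ : 0 ≤ -δ := by have := hsetD0 h hh; linarith
    rcases eq_or_lt_of_le hβ with hβ0 | hβ0
    · rw [← hβ0, div_zero]
      positivity
    rcases le_or_gt α 0 with hc | hc
    · have : α / -δ ≤ 0 := div_nonpos_of_nonpos_of_nonneg hc hβ
      have : (0:ℝ) ≤ lamStar⁻¹ := by positivity
      linarith
    · rw [inv_eq_one_div, div_le_div_iff₀ hβ0 lampos]
      nlinarith [key h hh]
  -- E(lamStar) does not meet the relative interior of D
  have disj : ∀ z ∈ Elam lamStar, z ∉ intrinsicInterior ℝ D := by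
    intro z hz hzr
    rw [hElam] at hz
    obtain ⟨x, hx, rfl⟩ := hz
    obtain ⟨t, ht, hmem⟩ := relint_ray hzr hS₀D' (hED hx)
    have hkey : S₀ - lamStar • (x - S₀) + t • (S₀ - x) = S₀ - (lamStar + t) • (x - S₀) := by
      funext i
      simp only [Pi.add_apply, Pi.sub_apply, Pi.smul_apply, smul_eq_mul]
      ring
    have hl : lamStar + t ∈ {l : ℝ | 0 < l ∧ (Elam l ∩ D).Nonempty} := by
      refine ⟨by linarith, ⟨S₀ - (lamStar + t) • (x - S₀), ?_, ?_⟩⟩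
      · rw [hElam]; exact ⟨x, hx, rfl⟩
      · rw [← hkey]; exact hmem
    have := hlam.1 hl
    linarith
  -- set up the direction space of the affine span of D
  have hS₀A : S₀ ∈ affineSpan ℝ D := subset_affineSpan ℝ D hS₀D'
  set W : Submodule ℝ (Fin d → ℝ) := (affineSpan ℝ D).direction with hWdef
  have memW : ∀ y ∈ D, y - S₀ ∈ W :=
    fun y hy => AffineSubspace.vsub_mem_direction (subset_affineSpan ℝ D hy) hS₀A
  have memWl : ∀ x ∈ Elam lamStar, x - S₀ ∈ W := by
    intro x hx
    rw [hElam] at hx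
    obtain ⟨e, he, rfl⟩ := hx
    have h1 : S₀ - lamStar • (e - S₀) - S₀ = (-lamStar) • (e - S₀) := by
      funext i
      simp only [Pi.sub_apply, Pi.smul_apply, smul_eq_mul, Pi.neg_apply]
      ring
    rw [h1]
    exact Submodule.smul_mem _ _ (memW e (hED he))
  have hmemA : ∀ w : W, (w : Fin d → ℝ) + S₀ ∈ affineSpan ℝ D := by
    intro w
    have := AffineSubspace.vadd_mem_of_mem_direction w.2 hS₀A
    simpa using this
  set φ : W → affineSpan ℝ D := fun w => ⟨(w : Fin d → ℝ) + S₀, hmemA w⟩ with hφ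
  have hψmem : ∀ p : affineSpan ℝ D, (p : Fin d → ℝ) - S₀ ∈ W := fun p =>
    AffineSubspace.vsub_mem_direction p.2 hS₀A
  set ψ : affineSpan ℝ D → W := fun p => ⟨(p : Fin d → ℝ) - S₀, hψmem p⟩ with hψ
  have hφcont : Continuous φ :=
    Continuous.subtype_mk (continuous_subtype_val.add continuous_const) _
  have hψcont : Continuous ψ :=
    Continuous.subtype_mk (continuous_subtype_val.sub continuous_const) _
  have hφψ : ∀ p, φ (ψ p) = p := fun p => Subtype.ext (by simp [hφ, hψ])
  have hψφ : ∀ w, ψ (φ w) = w := fun w => Subtype.ext (by simp [hφ, hψ])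
  set X : Set (affineSpan ℝ D) := ((↑) ⁻¹' D) with hX
  set Dw : Set W := φ ⁻¹' X with hDw
  have hintDw : interior Dw = φ ⁻¹' (interior X) := by
    apply Set.Subset.antisymm
    · intro w hw
      have hop : IsOpen (ψ ⁻¹' (interior Dw)) := isOpen_interior.preimage hψcont
      have hsub : ψ ⁻¹' (interior Dw) ⊆ X := by
        intro p hp
        have h1 : ψ p ∈ Dw := interior_subset hp
        rw [hDw, Set.mem_preimage, hφψ] at h1
        exact h1
      have h2 : φ w ∈ ψ ⁻¹' (interior Dw) := by
        rw [Set.mem_preimage, hψφ]; exact hw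
      exact Set.mem_preimage.2 (interior_maximal hsub hop h2)
    · exact interior_maximal (Set.preimage_mono interior_subset)
        (isOpen_interior.preimage hφcont)
  have int_toRelint : ∀ w ∈ interior Dw, (w : Fin d → ℝ) + S₀ ∈ intrinsicInterior ℝ D := by
    intro w hw
    rw [hintDw] at hw
    exact mem_intrinsicInterior.2 ⟨φ w, hw, rfl⟩
  have relint_toInt : ∀ y ∈ intrinsicInterior ℝ D, ∀ hyW : y - S₀ ∈ W,
      (⟨y - S₀, hyW⟩ : W) ∈ interior Dw := by
    intro y hy hyW
    obtain ⟨p, hp, hpy⟩ := mem_intrinsicInterior.1 hy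
    rw [hintDw, Set.mem_preimage]
    have h1 : φ ⟨y - S₀, hyW⟩ = p := Subtype.ext (by simp [hφ, hpy])
    rw [h1]; exact hp
  have h0int : (0 : W) ∈ interior Dw := by
    have h1 : S₀ - S₀ ∈ W := by rw [sub_self]; exact W.zero_mem
    have h2 := relint_toInt S₀ hS₀D h1
    have h3 : (⟨S₀ - S₀, h1⟩ : W) = 0 := Subtype.ext (by simp)
    rwa [h3] at h2
  have hDwconv : Convex ℝ Dw := by
    intro w₁ h1 w₂ h2 a b ha hb hab
    have h1' : (w₁ : Fin d → ℝ) + S₀ ∈ D := h1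
    have h2' : (w₂ : Fin d → ℝ) + S₀ ∈ D := h2
    have heq : (↑(a • w₁ + b • w₂) : Fin d → ℝ) + S₀ =
        a • ((w₁ : Fin d → ℝ) + S₀) + b • ((w₂ : Fin d → ℝ) + S₀) := by
      funext i
      simp only [Submodule.coe_add, Submodule.coe_smul, Pi.add_apply, Pi.smul_apply, smul_eq_mul]
      linear_combination S₀ i * hab.symm
    show (↑(a • w₁ + b • w₂) : Fin d → ℝ) + S₀ ∈ D
    rw [heq]
    exact hDconv h1' h2' ha hb hab
  set Cw : Set W := {w : W | (w : Fin d → ℝ) + S₀ ∈ Elam lamStar} with hCw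
  have hCwconv : Convex ℝ Cw := by
    intro w₁ h1 w₂ h2 a b ha hb hab
    have h1' : (w₁ : Fin d → ℝ) + S₀ ∈ Elam lamStar := h1
    have h2' : (w₂ : Fin d → ℝ) + S₀ ∈ Elam lamStar := h2
    rw [hElam] at h1' h2'
    obtain ⟨e₁, he₁, hc1⟩ := h1'
    obtain ⟨e₂, he₂, hc2⟩ := h2'
    show (↑(a • w₁ + b • w₂) : Fin d → ℝ) + S₀ ∈ Elam lamStar
    rw [hElam]
    refine ⟨a • e₁ + b • e₂, hEc he₁ he₂ ha hb hab, ?_⟩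
    funext i
    have h1i := congrFun hc1 i
    have h2i := congrFun hc2 i
    simp only [Pi.sub_apply, Pi.smul_apply, Pi.add_apply, smul_eq_mul] at h1i h2i
    simp only [Submodule.coe_add, Submodule.coe_smul, Pi.add_apply, Pi.smul_apply,
      Pi.sub_apply, smul_eq_mul]
    linear_combination a * h1i + b * h2i - lamStar * S₀ i * hab
  have hdisjCD : Disjoint (interior Dw) Cw := by
    rw [Set.disjoint_left]
    intro w hwi hwc
    exact disj _ hwc (int_toRelint w hwi)
  obtain ⟨f, u, hfu, hcu⟩ :=
    geometric_hahn_banach_open (hDwconv.interior) isOpen_interior hCwconv hdisjCD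
  have hDwle : ∀ w ∈ Dw, f w ≤ u := by
    intro w hw
    have htend : Filter.Tendsto (fun n : ℕ => (1 - 1/(n+1) : ℝ) • w) Filter.atTop (nhds w) := by
      have h1 : Filter.Tendsto (fun n : ℕ => (1 - 1/(n+1) : ℝ)) Filter.atTop (nhds 1) := by
        have h2 : Filter.Tendsto (fun n : ℕ => 1 / ((n : ℝ) + 1)) Filter.atTop (nhds 0) :=
          tendsto_one_div_add_atTop_nhds_zero_nat
        have h3 := Filter.Tendsto.const_sub (1:ℝ) h2
        simpa using h3
      have h4 := h1.smul (tendsto_const_nhds (x := w))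
      simpa using h4
    have hcl : w ∈ closure (interior Dw) := by
      apply mem_closure_of_tendsto htend
      filter_upwards with n
      have hpos : (0:ℝ) < 1/(n+1) := by positivity
      have hle : (1/(n+1):ℝ) ≤ 1 := by
        rw [div_le_one (by positivity)]
        have : (0:ℝ) ≤ (n:ℝ) := Nat.cast_nonneg n
        linarith
      have h5 := hDwconv.combo_interior_self_mem_interior h0int hw hpos
        (by linarith : (0:ℝ) ≤ 1 - 1/(n+1)) (by ring)
      simpa using h5
    have hsub : closure (interior Dw) ⊆ {w : W | f w ≤ u} := by
      apply closure_minimal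
      · intro w' hw'; exact (hfu w' hw').le
      · exact IsClosed.preimage f.continuous isClosed_Iic
    exact hsub hcl
  obtain ⟨gF, hgF, -⟩ := exists_extension_norm_eq W f
  set hvec : Fin d → ℝ := fun i => -(gF (Pi.single i 1 : Fin d → ℝ)) with hhvec
  have hdot : ∀ x, hvec ⬝ᵥ x = -(gF x) := by
    intro x
    have h1 := clm_dot gF x
    calc hvec ⬝ᵥ x = -((fun i => gF (Pi.single i 1 : Fin d → ℝ)) ⬝ᵥ x) := by
          simp [hhvec, dotProduct, neg_mul, Finset.sum_neg_distrib]
    _ = -(gF x) := by rw [h1]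
  set a₀ : ℝ := hvec ⬝ᵥ S₀ - u with ha₀
  have hCineq : ∀ x ∈ Elam lamStar, hvec ⬝ᵥ x ≤ a₀ := by
    intro x hx
    have hxW : x - S₀ ∈ W := memWl x hx
    have hwC : (⟨x - S₀, hxW⟩ : W) ∈ Cw := by
      show (x - S₀) + S₀ ∈ Elam lamStar
      rw [sub_add_cancel]; exact hx
    have h1 : u ≤ f ⟨x - S₀, hxW⟩ := hcu _ hwC
    have h2 : gF (x - S₀) = f ⟨x - S₀, hxW⟩ := hgF ⟨x - S₀, hxW⟩
    have h3 : gF (x - S₀) = gF x - gF S₀ := map_sub gF x S₀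
    rw [hdot, ha₀, hdot]
    linarith
  have hDineq : ∀ y ∈ D, a₀ ≤ hvec ⬝ᵥ y := by
    intro y hy
    have hyW : y - S₀ ∈ W := memW y hy
    have hwD : (⟨y - S₀, hyW⟩ : W) ∈ Dw := by
      show (y - S₀) + S₀ ∈ D
      rw [sub_add_cancel]; exact hy
    have h1 : f ⟨y - S₀, hyW⟩ ≤ u := hDwle _ hwD
    have h2 : gF (y - S₀) = f ⟨y - S₀, hyW⟩ := hgF ⟨y - S₀, hyW⟩
    have h3 : gF (y - S₀) = gF y - gF S₀ := map_sub gF y S₀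
    rw [hdot, ha₀, hdot]
    linarith
  have hRint : ∀ y ∈ intrinsicInterior ℝ D, a₀ < hvec ⬝ᵥ y := by
    intro y hy
    have hyW : y - S₀ ∈ W := memW y (intrinsicInterior_subset hy)
    have h1 : (⟨y - S₀, hyW⟩ : W) ∈ interior Dw := relint_toInt y hy hyW
    have h2 : f ⟨y - S₀, hyW⟩ < u := hfu _ h1
    have h3 : gF (y - S₀) = f ⟨y - S₀, hyW⟩ := hgF ⟨y - S₀, hyW⟩
    have h4 : gF (y - S₀) = gF y - gF S₀ := map_sub gF y S₀
    rw [hdot, ha₀, hdot]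
    linarith
  have hvecH : hvec ∈ H := by
    apply mem_of_dual_dual hHcl hHconv hHcone h0H
    intro k hk
    have hkstar : k ∈ Hstar := by rw [hHstar]; exact hk
    by_contra hneg
    push_neg at hneg
    have hray : ∀ t : ℝ, 0 ≤ t → S₀ + t • k ∈ D := by
      intro t ht
      have h1 := hS₀D'
      rw [hD, Set.mem_add] at h1
      obtain ⟨g₀, hg₀, k₀, hk₀, hsum⟩ := h1
      have h2 : t • k ∈ Hstar := by
        rw [hHstar]; intro h' hh'
        rw [dotProduct_smul, smul_eq_mul]
        exact mul_nonneg ht (hstarMem k hkstar h' hh')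
      have h3 : k₀ + t • k ∈ Hstar := by
        rw [hHstar]; intro h' hh'
        rw [dotProduct_add]
        have h4 := hstarMem _ hk₀ h' hh'
        have h5 := hstarMem _ h2 h' hh'
        linarith
      have h6 := Set.add_mem_add hg₀ h3
      rw [← hD] at h6
      rw [show g₀ + (k₀ + t • k) = (g₀ + k₀) + t • k by abel, hsum] at h6
      exact h6
    have hS₀ray := hRint S₀ hS₀D
    set t₀ : ℝ := (hvec ⬝ᵥ S₀ - a₀ + 1) / (-(hvec ⬝ᵥ k)) with ht₀
    have ht₀pos : 0 < t₀ := by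
      apply div_pos
      · linarith
      · linarith
    have h4 := hDineq _ (hray t₀ ht₀pos.le)
    rw [dotProduct_add, dotProduct_smul, smul_eq_mul] at h4
    have hK : hvec ⬝ᵥ k ≠ 0 := ne_of_lt hneg
    have h5 : t₀ * (hvec ⬝ᵥ k) = -(hvec ⬝ᵥ S₀ - a₀ + 1) := by
      rw [ht₀]
      field_simp [hK]
    linarith
  -- characterization of maximizers
  have memN_iff : ∀ h ∈ H, (RAROC h = lamStar⁻¹ ↔ h ∈ N) := by
    intro h hh
    set α := sInf {r | ∃ x ∈ E, r = h ⬝ᵥ (x - S₀)} with hα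
    set δ := sInf {r | ∃ x ∈ D, r = h ⬝ᵥ (x - S₀)} with hδ
    constructor
    · intro hr
      rw [hRAROC] at hr
      have hβ : 0 ≤ -δ := by have := hsetD0 h hh; linarith
      have hβ0 : 0 < -δ := by
        rcases eq_or_lt_of_le hβ with h1 | h1
        · exfalso
          rw [← h1, div_zero] at hr
          have h2 : (0:ℝ) < lamStar⁻¹ := by positivity
          rw [← hr] at h2
          exact lt_irrefl _ h2
        · exact h1
      have hαval : lamStar * α = -δ := by
        rw [div_eq_iff (ne_of_gt hβ0), ← hα] at hr
        rw [hr, ← mul_assoc, mul_inv_cancel₀ (ne_of_gt lampos), one_mul]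
      rw [hN]
      refine ⟨hh, h ⬝ᵥ S₀ + δ, ?_, ?_, ?_⟩
      · intro x hx
        rw [hElam] at hx
        obtain ⟨e, he, rfl⟩ := hx
        have h2 : α ≤ h ⬝ᵥ (e - S₀) := csInf_le (hsetEbdd h) ⟨e, he, rfl⟩
        have h3 : h ⬝ᵥ (S₀ - lamStar • (e - S₀)) = h ⬝ᵥ S₀ - lamStar * (h ⬝ᵥ (e - S₀)) := by
          rw [dotProduct_sub, dotProduct_smul, smul_eq_mul]
        rw [h3]
        nlinarith
      · intro y hy
        have h2 : δ ≤ h ⬝ᵥ (y - S₀) := csInf_le (hsetDbdd h hh) ⟨y, hy, rfl⟩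
        rw [dotProduct_sub] at h2
        linarith
      · intro y hy
        by_contra hcon
        push_neg at hcon
        have hymem : δ ≤ h ⬝ᵥ (y - S₀) :=
          csInf_le (hsetDbdd h hh) ⟨y, intrinsicInterior_subset hy, rfl⟩
        have heq : h ⬝ᵥ y = h ⬝ᵥ S₀ + δ := by
          rw [dotProduct_sub] at hymem
          linarith
        have hmin : ∀ z ∈ D, h ⬝ᵥ y ≤ h ⬝ᵥ z := by
          intro z hz
          have h2 : δ ≤ h ⬝ᵥ (z - S₀) := csInf_le (hsetDbdd h hh) ⟨z, hz, rfl⟩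
          rw [dotProduct_sub] at h2
          linarith
        have hconst := relint_min_const hy hmin S₀ hS₀D'
        rw [heq] at hconst
        linarith
    · intro hNmem
      rw [hN] at hNmem
      obtain ⟨-, a, hCa, hDa, hInt⟩ := hNmem
      have s2 : a - h ⬝ᵥ S₀ ≤ δ := by
        apply le_csInf (hsetDne h)
        rintro r ⟨y, hy, rfl⟩
        rw [dotProduct_sub]
        linarith [hDa y hy]
      have s3 : h ⬝ᵥ S₀ - a ≤ lamStar * α := by
        have hbound : ∀ r ∈ {r | ∃ x ∈ E, r = h ⬝ᵥ (x - S₀)}, (h ⬝ᵥ S₀ - a) / lamStar ≤ r := by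
          rintro r ⟨e, he, rfl⟩
          have h1 := hCa _ (by rw [hElam]; exact ⟨e, he, rfl⟩)
          rw [dotProduct_sub, dotProduct_smul, smul_eq_mul] at h1
          rw [div_le_iff₀ lampos]
          nlinarith
        have h2 := le_csInf (hsetEne h) hbound
        rw [div_le_iff₀ lampos] at h2
        nlinarith
      have s4 : a < h ⬝ᵥ S₀ := hInt S₀ hS₀D
      have s1 := key h hh
      have e1 : lamStar * α = -δ := le_antisymm s1 (by linarith)
      have hβ0 : 0 < -δ := by linarith
      have hαpos : 0 < α := by nlinarith
      rw [hRAROC]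
      rw [← hα, ← hδ, ← e1, mul_comm, div_mul_eq_div_div, div_self (ne_of_gt hαpos), one_div]
  have hmaxmem : RAROC hvec = lamStar⁻¹ :=
    (memN_iff hvec hvecH).2 (by rw [hN]; exact ⟨hvecH, a₀, hCineq, hDineq, hRint⟩)
  refine ⟨⟨⟨hvec, hvecH, hmaxmem⟩, ?_⟩, ?_⟩
  · intro r hr
    obtain ⟨h, hh, rfl⟩ := hr
    exact ub h hh
  · ext h
    simp only [Set.mem_setOf_eq]
    constructor
    · rintro ⟨hh, hr⟩
      exact (memN_iff h hh).1 hr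
    · intro hNm
      have hh : h ∈ H := by rw [hN] at hNm; exact hNm.1
      exact ⟨hh, (memN_iff h hh).2 hNm⟩
end

section
/- Assume λ* < ∞. If h ∈ H \ N, then either h is orthogonal to the smallest affine subspace containing D (in which case RAROC(h) = 0), or RAROC(h) < 1/λ*; while for h ∈ N, RAROC(h) = 1/λ*. -/
open Set Matrix
open scoped Pointwise

lemma extend_lemma {d : ℕ} {D : Set (Fin d → ℝ)} {y z : Fin d → ℝ}
    (hy : y ∈ intrinsicInterior ℝ D) (hz : z ∈ D) :
    ∃ ε : ℝ, 0 < ε ∧ y + ε • (y - z) ∈ D := by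
  rw [mem_intrinsicInterior] at hy
  obtain ⟨p, hp, rfl⟩ := hy
  have hzspan : z ∈ affineSpan ℝ D := subset_affineSpan ℝ D hz
  have hmem : ∀ t : ℝ, (↑p : Fin d → ℝ) + t • ((↑p : Fin d → ℝ) - z) ∈ affineSpan ℝ D := by
    intro t
    have := AffineMap.lineMap_mem (1 + t) hzspan p.2
    convert this using 1
    simp [AffineMap.lineMap_apply]
    module
  set f : ℝ → affineSpan ℝ D := fun t => ⟨(↑p : Fin d → ℝ) + t • ((↑p : Fin d → ℝ) - z), hmem t⟩ with hf
  have hfc : Continuous f := by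
    apply Continuous.subtype_mk
    fun_prop
  have hU : IsOpen (f ⁻¹' (interior ((↑) ⁻¹' D : Set (affineSpan ℝ D)))) :=
    isOpen_interior.preimage hfc
  have h0 : (0:ℝ) ∈ f ⁻¹' (interior ((↑) ⁻¹' D)) := by
    simp only [mem_preimage, hf]
    convert hp
    ext1
    simp
  rw [Metric.isOpen_iff] at hU
  obtain ⟨ε, hε, hball⟩ := hU 0 h0
  refine ⟨ε/2, by positivity, ?_⟩
  have : (ε/2 : ℝ) ∈ Metric.ball (0:ℝ) ε := by
    rw [Metric.mem_ball, Real.dist_eq, sub_zero, abs_of_pos (by positivity)]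
    linarith
  have := hball this
  have := interior_subset this
  simpa using this

/-- Case analysis for the agent-independent optimization: if `h ∈ H \ N`, then
either `h` is orthogonal to the smallest affine subspace containing `D` (and then
`RAROC h = 0`) or `RAROC h < λ*⁻¹`; while `RAROC h = λ*⁻¹` for `h ∈ N`. -/
theorem stmt1 {d : ℕ} (E G H Hstar D : Set (Fin d → ℝ))
    (hEc : Convex ℝ E) (hEk : IsCompact E) (hEne : E.Nonempty)
    (hGc : Convex ℝ G) (hGk : IsCompact G)
    (hEG : E ⊆ G)
    (hHcl : IsClosed H) (hHconv : Convex ℝ H)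
    (hHcone : ∀ c : ℝ, 0 ≤ c → ∀ h ∈ H, c • h ∈ H)
    (hHstar : Hstar = {x | ∀ h ∈ H, 0 ≤ h ⬝ᵥ x})
    (hD : D = G + Hstar)
    (S₀ : Fin d → ℝ)
    (hS₀D : S₀ ∈ intrinsicInterior ℝ D) (hS₀E : S₀ ∉ E)
    (RAROC : (Fin d → ℝ) → ℝ)
    (hRAROC : ∀ h, RAROC h =
      (sInf {r | ∃ x ∈ E, r = h ⬝ᵥ (x - S₀)}) /
        (-(sInf {r | ∃ x ∈ D, r = h ⬝ᵥ (x - S₀)})))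
    (Elam : ℝ → Set (Fin d → ℝ))
    (hElam : ∀ l, Elam l = (fun x => S₀ - l • (x - S₀)) '' E)
    (lamStar : ℝ)
    (hlam : IsLUB {l : ℝ | 0 < l ∧ (Elam l ∩ D).Nonempty} lamStar)
    (N : Set (Fin d → ℝ))
    (hN : N = {h ∈ H | ∃ a : ℝ,
      (∀ x ∈ Elam lamStar, h ⬝ᵥ x ≤ a) ∧ (∀ y ∈ D, a ≤ h ⬝ᵥ y) ∧
      ∀ y ∈ intrinsicInterior ℝ D, a < h ⬝ᵥ y}) :
    (∀ h ∈ H \ N,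
      ((∀ x ∈ D, ∀ y ∈ D, h ⬝ᵥ (x - y) = 0) ∧ RAROC h = 0) ∨
        RAROC h < lamStar⁻¹) ∧
    ∀ h ∈ N, RAROC h = lamStar⁻¹ := by
  have hS₀Dm : S₀ ∈ D := intrinsicInterior_subset hS₀D
  have hΛne : {l : ℝ | 0 < l ∧ (Elam l ∩ D).Nonempty}.Nonempty := by
    by_contra hc
    rw [not_nonempty_iff_eq_empty] at hc
    have h1 : lamStar ≤ lamStar - 1 := hlam.2 (by simp [hc, upperBounds])
    linarith
  obtain ⟨l₀, hl₀⟩ := hΛne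
  have hlamPos : 0 < lamStar := lt_of_lt_of_le hl₀.1 (hlam.1 hl₀)
  have hcont : ∀ h : Fin d → ℝ, Continuous (fun x : Fin d → ℝ => h ⬝ᵥ (x - S₀)) := by
    intro h
    unfold dotProduct
    fun_prop
  have hEset : ∀ h : Fin d → ℝ,
      {r | ∃ x ∈ E, r = h ⬝ᵥ (x - S₀)} = (fun x => h ⬝ᵥ (x - S₀)) '' E := by
    intro h; ext r; simp [eq_comm]
  have hEsetne : ∀ h : Fin d → ℝ, {r | ∃ x ∈ E, r = h ⬝ᵥ (x - S₀)}.Nonempty := by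
    intro h
    obtain ⟨x, hx⟩ := hEne
    exact ⟨h ⬝ᵥ (x - S₀), x, hx, rfl⟩
  have hEbddB : ∀ h : Fin d → ℝ, BddBelow {r | ∃ x ∈ E, r = h ⬝ᵥ (x - S₀)} := by
    intro h
    rw [hEset]
    exact (hEk.image (hcont h)).bddBelow
  have hEbddA : ∀ h : Fin d → ℝ, BddAbove {r | ∃ x ∈ E, r = h ⬝ᵥ (x - S₀)} := by
    intro h
    rw [hEset]
    exact (hEk.image (hcont h)).bddAbove
  have hDsetne : ∀ h : Fin d → ℝ, {r | ∃ x ∈ D, r = h ⬝ᵥ (x - S₀)}.Nonempty := by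
    intro h
    exact ⟨h ⬝ᵥ (S₀ - S₀), S₀, hS₀Dm, rfl⟩
  have hDbddB : ∀ h ∈ H, BddBelow {r | ∃ x ∈ D, r = h ⬝ᵥ (x - S₀)} := by
    intro h hh
    obtain ⟨b, hb⟩ := (hGk.image (hcont h)).bddBelow
    refine ⟨b, ?_⟩
    rintro r ⟨y, hyD, rfl⟩
    rw [hD] at hyD
    obtain ⟨g, hg, k, hk, rfl⟩ := hyD
    have h1 : h ⬝ᵥ (g + k - S₀) = h ⬝ᵥ (g - S₀) + h ⬝ᵥ k := by
      rw [← dotProduct_add]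
      congr 1
      abel
    have h2 : 0 ≤ h ⬝ᵥ k := by
      rw [hHstar] at hk
      exact hk h hh
    have h3 : b ≤ h ⬝ᵥ (g - S₀) := hb ⟨g, hg, rfl⟩
    rw [h1]
    linarith
  constructor
  · rintro h ⟨hhH, hhN⟩
    by_cases horth : ∀ x ∈ D, ∀ y ∈ D, h ⬝ᵥ (x - y) = 0
    · left
      refine ⟨horth, ?_⟩
      have hset : {r | ∃ x ∈ D, r = h ⬝ᵥ (x - S₀)} = {0} := by
        ext r
        simp only [mem_setOf_eq, mem_singleton_iff]
        constructor
        · rintro ⟨x, hx, rfl⟩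
          exact horth x hx S₀ hS₀Dm
        · rintro rfl
          exact ⟨S₀, hS₀Dm, by simp⟩
      rw [hRAROC, hset]
      simp
    · right
      set u := sInf {r | ∃ x ∈ E, r = h ⬝ᵥ (x - S₀)} with hu
      set v := sInf {r | ∃ x ∈ D, r = h ⬝ᵥ (x - S₀)} with hv
      have hvle : ∀ y ∈ D, v ≤ h ⬝ᵥ (y - S₀) := fun y hy =>
        csInf_le (hDbddB h hhH) ⟨y, hy, rfl⟩
      have hule : ∀ x ∈ E, u ≤ h ⬝ᵥ (x - S₀) := fun x hx =>
        csInf_le (hEbddB h) ⟨x, hx, rfl⟩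
      have hv0 : v ≤ 0 := by
        have := hvle S₀ hS₀Dm
        simpa using this
      rcases eq_or_lt_of_le hv0 with hveq | hvlt
      · rw [hRAROC, ← hu, ← hv, hveq]
        simpa using inv_pos.mpr hlamPos
      · have hkey : lamStar * u < -v := by
          by_contra hge
          push_neg at hge
          apply hhN
          rw [hN]
          refine ⟨hhH, h ⬝ᵥ S₀ + v, ?_, ?_, ?_⟩
          · intro x hx
            rw [hElam] at hx
            obtain ⟨x', hx', rfl⟩ := hx
            have h1 : u ≤ h ⬝ᵥ (x' - S₀) := hule x' hx'
            have h2 : h ⬝ᵥ (S₀ - lamStar • (x' - S₀)) =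
                h ⬝ᵥ S₀ - lamStar * (h ⬝ᵥ (x' - S₀)) := by
              rw [dotProduct_sub, dotProduct_smul, smul_eq_mul]
            rw [h2]
            nlinarith
          · intro y hy
            have := hvle y hy
            rw [dotProduct_sub] at this
            linarith
          · intro y hy
            rcases lt_or_ge (h ⬝ᵥ S₀ + v) (h ⬝ᵥ y) with h1 | h1
            · exact h1
            · exfalso
              have hyD : y ∈ D := intrinsicInterior_subset hy
              have heq : h ⬝ᵥ (y - S₀) = v :=
                le_antisymm (by rw [dotProduct_sub]; linarith) (hvle y hyD)
              have hallv : ∀ z ∈ D, h ⬝ᵥ (z - S₀) = v := by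
                intro z hz
                obtain ⟨ε, hε, hw⟩ := extend_lemma hy hz
                have h3 := hvle _ hw
                have h4 : h ⬝ᵥ (y + ε • (y - z) - S₀) =
                    h ⬝ᵥ (y - S₀) + ε * (h ⬝ᵥ (y - z)) := by
                  rw [show y + ε • (y - z) - S₀ = (y - S₀) + ε • (y - z) by module,
                    dotProduct_add, dotProduct_smul, smul_eq_mul]
                have h5 : 0 ≤ h ⬝ᵥ (y - z) := by nlinarith
                have h6 : h ⬝ᵥ (z - S₀) = h ⬝ᵥ (y - S₀) - h ⬝ᵥ (y - z) := by
                  rw [show z - S₀ = (y - S₀) - (y - z) by module, dotProduct_sub]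
                exact le_antisymm (by rw [h6, heq]; linarith) (hvle z hz)
              apply horth
              intro x hx y' hy'
              have hx1 := hallv x hx
              have hy1 := hallv y' hy'
              rw [show x - y' = (x - S₀) - (y' - S₀) by module, dotProduct_sub]
              linarith
        rw [hRAROC, ← hu, ← hv, div_lt_iff₀ (by linarith : (0:ℝ) < -v)]
        have h7 : u < -v / lamStar := by
          rw [lt_div_iff₀ hlamPos]
          nlinarith
        rw [div_eq_inv_mul] at h7
        exact h7
  · intro h hhN
    rw [hN] at hhN
    obtain ⟨hhH, a, hEa, hDa, hIa⟩ := hhN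
    set u := sInf {r | ∃ x ∈ E, r = h ⬝ᵥ (x - S₀)} with hu
    set v := sInf {r | ∃ x ∈ D, r = h ⬝ᵥ (x - S₀)} with hv
    have hvle : ∀ y ∈ D, v ≤ h ⬝ᵥ (y - S₀) := fun y hy =>
      csInf_le (hDbddB h hhH) ⟨y, hy, rfl⟩
    have hule : ∀ x ∈ E, u ≤ h ⬝ᵥ (x - S₀) := fun x hx =>
      csInf_le (hEbddB h) ⟨x, hx, rfl⟩
    have hc : a < h ⬝ᵥ S₀ := hIa S₀ hS₀D
    have hElb : ∀ x ∈ E, h ⬝ᵥ S₀ - a ≤ lamStar * (h ⬝ᵥ (x - S₀)) := by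
      intro x hx
      have h1 : h ⬝ᵥ (S₀ - lamStar • (x - S₀)) ≤ a := by
        apply hEa
        rw [hElam]
        exact ⟨x, hx, rfl⟩
      rw [dotProduct_sub, dotProduct_smul, smul_eq_mul] at h1
      linarith
    have hu_lb : h ⬝ᵥ S₀ - a ≤ lamStar * u := by
      have h8 : (h ⬝ᵥ S₀ - a) / lamStar ≤ u := by
        apply le_csInf (hEsetne h)
        rintro r ⟨x, hx, rfl⟩
        rw [div_le_iff₀ hlamPos]
        have := hElb x hx
        nlinarith
      rw [div_le_iff₀ hlamPos] at h8
      nlinarith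
    have hv_lb : a - h ⬝ᵥ S₀ ≤ v := by
      apply le_csInf (hDsetne h)
      rintro r ⟨y, hy, rfl⟩
      have := hDa y hy
      rw [dotProduct_sub]
      linarith
    have hge : -v ≤ lamStar * u := by linarith
    obtain ⟨M, hM⟩ := hEbddA h
    set M' : ℝ := max M 1 with hM'
    have hM'pos : 0 < M' := lt_of_lt_of_le one_pos (le_max_right M 1)
    have hMle : ∀ x ∈ E, h ⬝ᵥ (x - S₀) ≤ M' :=
      fun x hx => le_trans (hM ⟨x, hx, rfl⟩) (le_max_left M 1)
    have happrox : ∀ δ : ℝ, 0 < δ → ∃ l, (0 < l ∧ (Elam l ∩ D).Nonempty) ∧ lamStar - δ < l := by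
      intro δ hδ
      by_contra hcon
      push_neg at hcon
      have : lamStar ≤ lamStar - δ := hlam.2 (fun l hl => hcon l hl)
      linarith
    have hstep : ∀ δ : ℝ, 0 < δ →
        ∃ x ∈ E, ∃ l, 0 < l ∧ l ≤ lamStar ∧ lamStar - δ < l ∧ v ≤ -l * (h ⬝ᵥ (x - S₀)) := by
      intro δ hδ
      obtain ⟨l, ⟨hlpos, ⟨w, hwE, hwD⟩⟩, hld⟩ := happrox δ hδ
      rw [hElam] at hwE
      obtain ⟨x, hx, rfl⟩ := hwE
      refine ⟨x, hx, l, hlpos,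
        hlam.1 ⟨hlpos, ⟨_, by rw [hElam]; exact ⟨x, hx, rfl⟩, hwD⟩⟩, hld, ?_⟩
      have h9 := hvle _ hwD
      have h1 : h ⬝ᵥ (S₀ - l • (x - S₀) - S₀) = -l * (h ⬝ᵥ (x - S₀)) := by
        rw [show S₀ - l • (x - S₀) - S₀ = (-l) • (x - S₀) by module,
          dotProduct_smul, smul_eq_mul]
      rw [h1] at h9
      exact h9
    have hvneg : v < 0 := by
      obtain ⟨x, hx, l, hlpos, hlle, hld, hvx⟩ := hstep (lamStar / 2) (by positivity)
      have h1 := hElb x hx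
      have h2 : 0 < h ⬝ᵥ (x - S₀) := by nlinarith
      nlinarith
    have hle : lamStar * u ≤ -v := by
      apply le_of_forall_pos_le_add
      intro ε hε
      obtain ⟨x, hx, l, hlpos, hlle, hld, hvx⟩ := hstep (ε / M') (by positivity)
      have h1 := hElb x hx
      have h2 : 0 < h ⬝ᵥ (x - S₀) := by nlinarith
      have h3 : h ⬝ᵥ (x - S₀) ≤ M' := hMle x hx
      have h4 : u ≤ h ⬝ᵥ (x - S₀) := hule x hx
      have h5 : (lamStar - l) * (h ⬝ᵥ (x - S₀)) ≤ (ε / M') * M' :=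
        mul_le_mul (by linarith) h3 (le_of_lt h2) (by positivity)
      rw [div_mul_cancel₀ _ (ne_of_gt hM'pos)] at h5
      nlinarith
    have heq : lamStar * u = -v := le_antisymm hle hge
    have hupos : 0 < u := by nlinarith
    rw [hRAROC, ← hu, ← hv, ← heq]
    rw [eq_comm, inv_eq_iff_eq_inv, eq_comm, inv_eq_one_div]
    field_simp
end

section
/- Let ξ be a Gaussian vector in ℝ^d with mean a and covariance C, S₀ in the relative interior of G = a + {C^{1/2}x : ‖x‖ ≤ γ} with S₀ ≠ a, and u(⟨h,ξ⟩) = ⟨h,a⟩ - γ√⟨h, C h⟩. Then the maximal RAROC over h ∈ ℝ^d equals r/(γ - r) where r = ⟨S₀ - a, C^{-1}(S₀ - a)⟩^{1/2}, and the set of maximizers is {h : C h = c(a - S₀), c > 0}. -/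
open Set Matrix

/-- Gaussian optimization example: with `S₁ ~ N(a, C)`, `PD = {P}`, `H = ℝ^d`,
and a law-invariant coherent utility with `u(N(m,σ²)) = m - γσ`, the maximal
RAROC equals `r/(γ - r)` with `r = ⟨S₀-a, C⁻¹(S₀-a)⟩^{1/2}`, and the maximizers
are exactly `{h : C h = c (a - S₀), c > 0}`. -/
theorem stmt2 {d : ℕ} (C : Matrix (Fin d) (Fin d) ℝ) (hC : C.PosDef)
    (a S₀ : Fin d → ℝ) (γ : ℝ) (hγ : 0 < γ) (hS₀ : S₀ ≠ a)
    (r : ℝ) (hr : r = Real.sqrt ((S₀ - a) ⬝ᵥ (C⁻¹ *ᵥ (S₀ - a))))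
    (hrγ : r < γ)
    (RAROC : (Fin d → ℝ) → ℝ)
    (hRAROC : ∀ h, RAROC h =
      (h ⬝ᵥ (a - S₀)) / (γ * Real.sqrt (h ⬝ᵥ (C *ᵥ h)) - h ⬝ᵥ (a - S₀))) :
    IsGreatest (Set.range RAROC) (r / (γ - r)) ∧
      {h | RAROC h = r / (γ - r)} =
        {h | ∃ c : ℝ, 0 < c ∧ C *ᵥ h = c • (a - S₀)} := by
  classical
  have hCt : Cᵀ = C := by simpa using (congrArg Matrix.transpose hC.1.eq).symm
  have hsym : ∀ x y : Fin d → ℝ, x ⬝ᵥ C *ᵥ y = y ⬝ᵥ C *ᵥ x := fun x y => by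
    rw [Matrix.dotProduct_mulVec, ← Matrix.mulVec_transpose, hCt, dotProduct_comm]
  have hpos : ∀ x : Fin d → ℝ, x ≠ 0 → 0 < x ⬝ᵥ C *ᵥ x := fun x hx => by
    simpa using hC.dotProduct_mulVec_pos hx
  have hnn : ∀ x : Fin d → ℝ, 0 ≤ x ⬝ᵥ C *ᵥ x := fun x => by
    by_cases hx : x = 0
    · simp [hx]
    · exact (hpos x hx).le
  have hquad : ∀ (u v : Fin d → ℝ) (l : ℝ),
      (u - l • v) ⬝ᵥ C *ᵥ (u - l • v)
        = u ⬝ᵥ C *ᵥ u - 2*l*(u ⬝ᵥ C *ᵥ v) + l^2*(v ⬝ᵥ C *ᵥ v) := fun u v l => by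
    simp only [Matrix.mulVec_sub, Matrix.mulVec_smul, sub_dotProduct,
      dotProduct_sub, smul_dotProduct, dotProduct_smul, smul_eq_mul]
    rw [hsym v u]; ring
  set b : Fin d → ℝ := a - S₀ with hbdef
  have hbne : b ≠ 0 := sub_ne_zero.mpr (Ne.symm hS₀)
  have hdet : IsUnit C.det := hC.det_pos.ne'.isUnit
  set y₀ : Fin d → ℝ := C⁻¹ *ᵥ b with hy0
  have hCy : C *ᵥ y₀ = b := by
    rw [hy0, Matrix.mulVec_mulVec, Matrix.mul_nonsing_inv _ hdet, Matrix.one_mulVec]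
  have hy0ne : y₀ ≠ 0 := fun h0 => hbne (by rw [← hCy, h0, Matrix.mulVec_zero])
  set Q : ℝ := y₀ ⬝ᵥ C *ᵥ y₀ with hQdef
  have hQpos : 0 < Q := hpos y₀ hy0ne
  have hyb : y₀ ⬝ᵥ b = Q := by rw [hQdef, hCy]
  have hrQ : r = Real.sqrt Q := by
    rw [hr]
    congr 1
    have hSa : S₀ - a = -b := by rw [hbdef]; abel
    rw [hSa]
    calc (-b) ⬝ᵥ C⁻¹ *ᵥ (-b) = b ⬝ᵥ C⁻¹ *ᵥ b := by
          rw [Matrix.mulVec_neg, neg_dotProduct, dotProduct_neg, neg_neg]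
      _ = b ⬝ᵥ y₀ := rfl
      _ = y₀ ⬝ᵥ b := dotProduct_comm _ _
      _ = Q := hyb
  have hrpos : 0 < r := hrQ ▸ Real.sqrt_pos.mpr hQpos
  have hr2 : r^2 = Q := by rw [hrQ, Real.sq_sqrt hQpos.le]
  have hγr : 0 < γ - r := sub_pos.mpr hrγ
  -- Cauchy–Schwarz
  have hCS : ∀ h : Fin d → ℝ, (h ⬝ᵥ b)^2 ≤ (h ⬝ᵥ C *ᵥ h) * Q := fun h => by
    have h1 : h ⬝ᵥ C *ᵥ y₀ = h ⬝ᵥ b := by rw [hCy]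
    have key := hquad (Q • h) y₀ (h ⬝ᵥ b)
    simp only [smul_dotProduct, dotProduct_smul, Matrix.mulVec_smul,
      smul_eq_mul] at key
    rw [h1] at key
    have h0 := hnn (Q • h - (h ⬝ᵥ b) • y₀)
    rw [key] at h0
    nlinarith [hQpos, h0]
  have hCSeq : ∀ h : Fin d → ℝ, (h ⬝ᵥ b)^2 = (h ⬝ᵥ C *ᵥ h) * Q →
      Q • h = (h ⬝ᵥ b) • y₀ := fun h heq => by
    by_contra hne
    have hzne : Q • h - (h ⬝ᵥ b) • y₀ ≠ 0 := sub_ne_zero.mpr hne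
    have hz := hpos _ hzne
    have h1 : h ⬝ᵥ C *ᵥ y₀ = h ⬝ᵥ b := by rw [hCy]
    have key := hquad (Q • h) y₀ (h ⬝ᵥ b)
    simp only [smul_dotProduct, dotProduct_smul, Matrix.mulVec_smul,
      smul_eq_mul] at key
    rw [h1] at key
    rw [key] at hz
    nlinarith [heq, hz]
  -- upper bound
  have hub : ∀ h : Fin d → ℝ, RAROC h ≤ r / (γ - r) := fun h => by
    rw [hRAROC h]
    by_cases hh : h = 0
    · rw [hh]
      simp only [zero_dotProduct, Matrix.mulVec_zero, Real.sqrt_zero, mul_zero,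
        sub_zero, zero_div]
      exact div_nonneg hrpos.le hγr.le
    · have hPpos : 0 < h ⬝ᵥ C *ᵥ h := hpos h hh
      have hspos : 0 < Real.sqrt (h ⬝ᵥ C *ᵥ h) := Real.sqrt_pos.mpr hPpos
      set s : ℝ := Real.sqrt (h ⬝ᵥ C *ᵥ h) with hs
      have hs2 : s^2 = h ⬝ᵥ C *ᵥ h := Real.sq_sqrt hPpos.le
      have hts : h ⬝ᵥ b ≤ r * s := by
        have h2 : (h ⬝ᵥ b)^2 ≤ (r*s)^2 := by
          rw [mul_pow, hr2, hs2]
          calc (h ⬝ᵥ b)^2 ≤ (h ⬝ᵥ C *ᵥ h) * Q := hCS h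
            _ = Q * (h ⬝ᵥ C *ᵥ h) := mul_comm _ _
        nlinarith [mul_pos hrpos hspos, h2]
      rcases le_or_gt (h ⬝ᵥ b) 0 with ht | ht
      · have hD : 0 < γ * s - h ⬝ᵥ b := by nlinarith [mul_pos hγ hspos]
        have : (h ⬝ᵥ b) / (γ * s - h ⬝ᵥ b) ≤ 0 := div_nonpos_iff.mpr (Or.inr ⟨ht, hD.le⟩)
        exact this.trans (div_nonneg hrpos.le hγr.le)
      · have hD : 0 < γ * s - h ⬝ᵥ b := by nlinarith [mul_pos hγr hspos]
        rw [div_le_div_iff₀ hD hγr]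
        nlinarith [hts, hrpos, hγ]
  -- value at y₀
  have hval : ∀ c : ℝ, 0 < c → RAROC (c • y₀) = r / (γ - r) := fun c hc => by
    rw [hRAROC]
    have h1 : (c • y₀) ⬝ᵥ b = c * Q := by
      rw [smul_dotProduct, smul_eq_mul, hyb]
    have h2 : (c • y₀) ⬝ᵥ C *ᵥ (c • y₀) = (c*r)^2 := by
      rw [smul_dotProduct, Matrix.mulVec_smul, dotProduct_smul]
      rw [smul_eq_mul, smul_eq_mul, ← hQdef, mul_pow, hr2]; ring
    rw [h1, h2, Real.sqrt_sq (by positivity)]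
    rw [← hr2]
    rw [show γ * (c*r) - c * r^2 = (c*r) * (γ - r) by ring,
      show c * r^2 = (c*r) * r by ring,
      mul_div_mul_left _ _ (by positivity : c*r ≠ 0)]
  constructor
  · constructor
    · exact ⟨(1:ℝ) • y₀, hval 1 one_pos⟩
    · rintro v ⟨h, rfl⟩; exact hub h
  · ext h
    simp only [Set.mem_setOf_eq]
    constructor
    · intro heq
      have hRpos : 0 < r / (γ - r) := div_pos hrpos hγr
      have hh : h ≠ 0 := by
        intro h0
        rw [h0, hRAROC] at heq
        simp only [zero_dotProduct, Matrix.mulVec_zero, Real.sqrt_zero, mul_zero,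
          sub_zero, zero_div] at heq
        exact absurd heq.symm hRpos.ne'
      have hPpos : 0 < h ⬝ᵥ C *ᵥ h := hpos h hh
      have hspos : 0 < Real.sqrt (h ⬝ᵥ C *ᵥ h) := Real.sqrt_pos.mpr hPpos
      set s : ℝ := Real.sqrt (h ⬝ᵥ C *ᵥ h) with hs
      have hs2 : s^2 = h ⬝ᵥ C *ᵥ h := Real.sq_sqrt hPpos.le
      rw [hRAROC] at heq
      have ht : 0 < h ⬝ᵥ b := by
        by_contra hle
        push_neg at hle
        have hD : 0 < γ * s - h ⬝ᵥ b := by nlinarith [mul_pos hγ hspos]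
        have : (h ⬝ᵥ b) / (γ * s - h ⬝ᵥ b) ≤ 0 := div_nonpos_iff.mpr (Or.inr ⟨hle, hD.le⟩)
        rw [heq] at this
        exact absurd this (not_le.mpr hRpos)
      have hts : h ⬝ᵥ b ≤ r * s := by
        have h2 : (h ⬝ᵥ b)^2 ≤ (r*s)^2 := by
          rw [mul_pow, hr2, hs2]
          calc (h ⬝ᵥ b)^2 ≤ (h ⬝ᵥ C *ᵥ h) * Q := hCS h
            _ = Q * (h ⬝ᵥ C *ᵥ h) := mul_comm _ _
        nlinarith [mul_pos hrpos hspos, h2]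
      have hD : 0 < γ * s - h ⬝ᵥ b := by nlinarith [mul_pos hγr hspos]
      rw [div_eq_div_iff hD.ne' hγr.ne'] at heq
      have hteq : h ⬝ᵥ b = r * s := by
        have h1 : (h ⬝ᵥ b) * γ = (r * s) * γ := by linear_combination heq
        exact mul_right_cancel₀ hγ.ne' h1
      have hsq : (h ⬝ᵥ b)^2 = (h ⬝ᵥ C *ᵥ h) * Q := by
        rw [hteq, mul_pow, hr2, hs2]; ring
      have hQh := hCSeq h hsq
      refine ⟨(h ⬝ᵥ b) / Q, div_pos ht hQpos, ?_⟩
      have hCh : Q • (C *ᵥ h) = (h ⬝ᵥ b) • b := by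
        have := congrArg (C *ᵥ ·) hQh
        simpa only [Matrix.mulVec_smul, hCy] using this
      apply smul_right_injective (Fin d → ℝ) hQpos.ne'
      show Q • (C *ᵥ h) = Q • ((h ⬝ᵥ b / Q) • b)
      rw [hCh, smul_smul]
      congr 1
      field_simp
    · rintro ⟨c, hc, hch⟩
      have hhy : h = c • y₀ := by
        have : h = C⁻¹ *ᵥ (C *ᵥ h) := by
          rw [Matrix.mulVec_mulVec, Matrix.nonsing_inv_mul _ hdet, Matrix.one_mulVec]
        rw [this, hch, Matrix.mulVec_smul, hy0]
      rw [hhy]; exact hval c hc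
end

section
/- lim_{v→∞} V̄(F,v) ≤ sup_{Q∈D} E_Q F, and if sup_{X∈A, Q∈D} |E_Q X| < ∞ then lim_{v→∞} V̄(F,v) = sup_{Q∈D} E_Q F. -/
open MeasureTheory Set Filter Topology

/-- As the trade volume tends to infinity:
`lim_{v→∞} V̄(F,v) ≤ sup_{Q∈D} E_Q F`, and if `sup_{X∈A,Q∈D}|E_Q X| < ∞` then
`lim_{v→∞} V̄(F,v) = sup_{Q∈D} E_Q F`. -/
theorem stmt10 {Ω : Type*} [MeasurableSpace Ω]
    (P : Measure Ω) [IsProbabilityMeasure P]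
    (D : Set (Measure Ω)) (hDne : D.Nonempty)
    (hDprob : ∀ Q ∈ D, IsProbabilityMeasure Q)
    (hDac : ∀ Q ∈ D, Q ≪ P)
    (hDcomp : ∀ Y : Ω → ℝ, (∀ Q ∈ D, Integrable Y Q) →
      ∃ Q ∈ D, ∀ Q' ∈ D, ∫ ω, Y ω ∂Q ≤ ∫ ω, Y ω ∂Q')
    (A : Set (Ω → ℝ)) (hA0 : (0 : Ω → ℝ) ∈ A) (hAconv : Convex ℝ A)
    (hAint : ∀ Q ∈ D, ∀ X ∈ A, Integrable X Q)
    (F : Ω → ℝ) (hF : ∀ Q ∈ D, Integrable F Q)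
    (u : (Ω → ℝ) → ℝ)
    (hu : ∀ Y, u Y = sInf {r | ∃ Q ∈ D, r = ∫ ω, Y ω ∂Q})
    (hNGD : ∀ X ∈ A, u X ≤ 0)
    (Vbar : ℝ → ℝ)
    (hV : ∀ v, Vbar v =
      -(sSup {r | ∃ X ∈ A, r = u (fun ω => -(v * F ω) + X ω)}) / v) :
    limsup Vbar atTop ≤ sSup {r | ∃ Q ∈ D, r = ∫ ω, F ω ∂Q} ∧
    ((∃ M : ℝ, ∀ X ∈ A, ∀ Q ∈ D, |∫ ω, X ω ∂Q| ≤ M) →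
      Tendsto Vbar atTop (𝓝 (sSup {r | ∃ Q ∈ D, r = ∫ ω, F ω ∂Q}))) := by
  classical
  -- `u Y` is the minimum of `∫ Y dQ` over `Q ∈ D`
  have humin : ∀ Y : Ω → ℝ, (∀ Q ∈ D, Integrable Y Q) →
      ∃ Q ∈ D, u Y = ∫ ω, Y ω ∂Q ∧ ∀ Q' ∈ D, ∫ ω, Y ω ∂Q ≤ ∫ ω, Y ω ∂Q' := by
    intro Y hY
    obtain ⟨Q, hQ, hmin⟩ := hDcomp Y hY
    refine ⟨Q, hQ, ?_, hmin⟩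
    rw [hu]
    refine le_antisymm (csInf_le ⟨∫ ω, Y ω ∂Q, ?_⟩ ⟨Q, hQ, rfl⟩) (le_csInf ⟨_, Q, hQ, rfl⟩ ?_)
    · rintro r ⟨Q', hQ', rfl⟩; exact hmin Q' hQ'
    · rintro r ⟨Q', hQ', rfl⟩; exact hmin Q' hQ'
  -- maximizer of `∫ F dQ`
  obtain ⟨Qs, hQs, hQsmin⟩ := hDcomp (fun ω => -F ω) (fun Q hQ => (hF Q hQ).neg)
  have hmax : ∀ Q ∈ D, ∫ ω, F ω ∂Q ≤ ∫ ω, F ω ∂Qs := by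
    intro Q hQ
    have h := hQsmin Q hQ
    rw [integral_neg, integral_neg] at h
    linarith
  set S := ∫ ω, F ω ∂Qs with hSdef
  -- minimizer of `∫ F dQ`
  obtain ⟨Qm, hQm, hQmmin⟩ := hDcomp F hF
  set m := ∫ ω, F ω ∂Qm with hmdef
  have hSsup : sSup {r | ∃ Q ∈ D, r = ∫ ω, F ω ∂Q} = S := by
    apply le_antisymm
    · exact csSup_le ⟨S, Qs, hQs, rfl⟩ (by rintro r ⟨Q, hQ, rfl⟩; exact hmax Q hQ)
    · exact le_csSup ⟨S, by rintro r ⟨Q, hQ, rfl⟩; exact hmax Q hQ⟩ ⟨Qs, hQs, rfl⟩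
  have hint : ∀ v : ℝ, ∀ X ∈ A, ∀ Q ∈ D,
      Integrable (fun ω => -(v * F ω) + X ω) Q := by
    intro v X hX Q hQ
    exact (((hF Q hQ).const_mul v).neg).add (hAint Q hQ X hX)
  have hintval : ∀ v : ℝ, ∀ X ∈ A, ∀ Q ∈ D,
      (∫ ω, (-(v * F ω) + X ω) ∂Q) = -(v * ∫ ω, F ω ∂Q) + ∫ ω, X ω ∂Q := by
    intro v X hX Q hQ
    have h1 : Integrable (fun ω => -(v * F ω)) Q := ((hF Q hQ).const_mul v).neg
    rw [integral_add h1 (hAint Q hQ X hX), integral_neg, integral_const_mul]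
  -- main quantitative bounds
  have key : ∀ v : ℝ, 1 ≤ v → m ≤ Vbar v ∧ Vbar v ≤ S ∧
      (∀ M : ℝ, (∀ X ∈ A, ∀ Q ∈ D, |∫ ω, X ω ∂Q| ≤ M) → S - M / v ≤ Vbar v) := by
    intro v hv
    have hv0 : (0 : ℝ) < v := lt_of_lt_of_le one_pos hv
    set T := sSup {r | ∃ X ∈ A, r = u (fun ω => -(v * F ω) + X ω)} with hTdef
    have hVb : Vbar v = -T / v := hV v
    -- every element of the set is `≤ -(v*m)`
    have hub : ∀ r ∈ {r | ∃ X ∈ A, r = u (fun ω => -(v * F ω) + X ω)}, r ≤ -(v * m) := by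
      rintro r ⟨X, hX, rfl⟩
      obtain ⟨QX, hQX, huX, hminX⟩ := humin X (fun Q hQ => hAint Q hQ X hX)
      have hXle : ∫ ω, X ω ∂QX ≤ 0 := huX ▸ hNGD X hX
      obtain ⟨QY, hQY, huY, hminY⟩ := humin _ (fun Q hQ => hint v X hX Q hQ)
      have h1 : u (fun ω => -(v * F ω) + X ω) ≤ ∫ ω, (-(v * F ω) + X ω) ∂QX :=
        huY ▸ hminY QX hQX
      rw [hintval v X hX QX hQX] at h1
      have h2 : m ≤ ∫ ω, F ω ∂QX := hQmmin QX hQX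
      nlinarith [mul_le_mul_of_nonneg_left h2 hv0.le]
    have hne : {r | ∃ X ∈ A, r = u (fun ω => -(v * F ω) + X ω)}.Nonempty :=
      ⟨_, 0, hA0, rfl⟩
    have hbdd : BddAbove {r | ∃ X ∈ A, r = u (fun ω => -(v * F ω) + X ω)} :=
      ⟨-(v * m), hub⟩
    have hTub : T ≤ -(v * m) := csSup_le hne hub
    -- lower bound via X = 0
    have hTlb : -(v * S) ≤ T := by
      have hmem : u (fun ω => -(v * F ω) + (0 : Ω → ℝ) ω) ∈
          {r | ∃ X ∈ A, r = u (fun ω => -(v * F ω) + X ω)} := ⟨0, hA0, rfl⟩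
      obtain ⟨Q0, hQ0, hu0, hmin0⟩ := humin _ (fun Q hQ => hint v 0 hA0 Q hQ)
      have hval := hintval v 0 hA0 Q0 hQ0
      simp only [Pi.zero_apply, integral_zero, add_zero] at hval
      have h3 : -(v * S) ≤ u (fun ω => -(v * F ω) + (0 : Ω → ℝ) ω) := by
        rw [hu0]
        simp only [Pi.zero_apply, add_zero]
        rw [hval]
        have h4 : ∫ ω, F ω ∂Q0 ≤ S := hmax Q0 hQ0
        nlinarith [mul_le_mul_of_nonneg_left h4 hv0.le]
      exact h3.trans (le_csSup hbdd hmem)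
    refine ⟨?_, ?_, ?_⟩
    · rw [hVb, le_div_iff₀ hv0]
      nlinarith
    · rw [hVb, div_le_iff₀ hv0]
      nlinarith
    · intro M hM
      have hub2 : ∀ r ∈ {r | ∃ X ∈ A, r = u (fun ω => -(v * F ω) + X ω)},
          r ≤ -(v * S) + M := by
        rintro r ⟨X, hX, rfl⟩
        obtain ⟨QY, hQY, huY, hminY⟩ := humin _ (fun Q hQ => hint v X hX Q hQ)
        have h1 : u (fun ω => -(v * F ω) + X ω) ≤ ∫ ω, (-(v * F ω) + X ω) ∂Qs :=
          huY ▸ hminY Qs hQs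
        rw [hintval v X hX Qs hQs] at h1
        have h2 : ∫ ω, X ω ∂Qs ≤ M := le_of_abs_le (hM X hX Qs hQs)
        linarith
      have hTub2 : T ≤ -(v * S) + M := csSup_le hne hub2
      rw [hVb, le_div_iff₀ hv0]
      have hexp : (S - M / v) * v = S * v - M := by field_simp
      rw [hexp]
      linarith
  rw [hSsup]
  constructor
  · have h1 : ∀ᶠ v in atTop, Vbar v ≤ S :=
      (eventually_ge_atTop 1).mono fun v hv => (key v hv).2.1
    have h2 : ∀ᶠ v in atTop, m ≤ Vbar v :=
      (eventually_ge_atTop 1).mono fun v hv => (key v hv).1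
    exact limsup_le_of_le (IsBoundedUnder.isCoboundedUnder_le ⟨m, h2⟩) h1
  · rintro ⟨M, hM⟩
    have hg : Tendsto (fun v : ℝ => S - M / v) atTop (𝓝 S) := by
      have : Tendsto (fun v : ℝ => M / v) atTop (𝓝 0) :=
        tendsto_const_nhds.div_atTop tendsto_id
      simpa using tendsto_const_nhds.sub this
    refine tendsto_of_tendsto_of_tendsto_of_le_of_le' hg tendsto_const_nhds ?_ ?_
    · exact (eventually_ge_atTop 1).mono fun v hv => (key v hv).2.2 M hM
    · exact (eventually_ge_atTop 1).mono fun v hv => (key v hv).2.1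
end

section
/- If X* maximizes RAROC over A, then D* ∩ R = ((1/(1+R*)) X_PD(X*) + (R*/(1+R*)) X_RD(X*)) ∩ R, where X_PD(X*) and X_RD(X*) are the sets of measures attaining the respective infima at X*. -/
open MeasureTheory Set
open scoped Classical

/-- If `X*` maximizes RAROC over `A`, then
`D* ∩ R = ((1/(1+R*)) X_PD(X*) + (R*/(1+R*)) X_RD(X*)) ∩ R`, where `X_PD(X*)`
and `X_RD(X*)` are the sets of measures attaining the respective infima at `X*`. -/
theorem stmt12 {Ω : Type*} [MeasurableSpace Ω]
    (P : Measure Ω) [IsProbabilityMeasure P]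
    (PD RD : Set (Measure Ω)) (hPDRD : PD ⊆ RD)
    (hRDne : RD.Nonempty) (hPDne : PD.Nonempty)
    (hRDprob : ∀ Q ∈ RD, IsProbabilityMeasure Q)
    (hRDac : ∀ Q ∈ RD, Q ≪ P)
    (hRDconv : ∀ Q₁ ∈ RD, ∀ Q₂ ∈ RD, ∀ t : ℝ, 0 ≤ t → t ≤ 1 →
      (ENNReal.ofReal t • Q₁ + ENNReal.ofReal (1 - t) • Q₂ : Measure Ω) ∈ RD)
    (hPDconv : ∀ Q₁ ∈ PD, ∀ Q₂ ∈ PD, ∀ t : ℝ, 0 ≤ t → t ≤ 1 →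
      (ENNReal.ofReal t • Q₁ + ENNReal.ofReal (1 - t) • Q₂ : Measure Ω) ∈ PD)
    (A : Set (Ω → ℝ)) (hA0 : (0 : Ω → ℝ) ∈ A) (hAconv : Convex ℝ A)
    (hAint : ∀ Q ∈ RD, ∀ X ∈ A, Integrable X Q)
    (RAROC : (Ω → ℝ) → EReal)
    (hRAROC : ∀ Y, RAROC Y =
      if 0 < sInf {r | ∃ Q ∈ PD, r = ∫ ω, Y ω ∂Q} ∧
          0 ≤ sInf {r | ∃ Q ∈ RD, r = ∫ ω, Y ω ∂Q}
      then (⊤ : EReal)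
      else ((sInf {r | ∃ Q ∈ PD, r = ∫ ω, Y ω ∂Q} /
        (-(sInf {r | ∃ Q ∈ RD, r = ∫ ω, Y ω ∂Q})) : ℝ) : EReal))
    (Rstar : ℝ) (hRstar0 : 0 < Rstar)
    (Xstar : Ω → ℝ) (hXstarA : Xstar ∈ A)
    (hXstarMax : ∀ X ∈ A, RAROC X ≤ RAROC Xstar)
    (hXstarVal : RAROC Xstar = (Rstar : EReal))
    (Dstar : Set (Measure Ω))
    (hDstar : Dstar = {Q | ∃ Q₁ ∈ PD, ∃ Q₂ ∈ RD,
      Q = (ENNReal.ofReal (1 / (1 + Rstar)) • Q₁ +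
        ENNReal.ofReal (Rstar / (1 + Rstar)) • Q₂ : Measure Ω)})
    (R : Set (Measure Ω))
    (hR : R = {Q | IsProbabilityMeasure Q ∧ Q ≪ P ∧ ∀ X ∈ A, ∫ ω, X ω ∂Q ≤ 0})
    (XPD XRD : Set (Measure Ω))
    (hXPD : XPD = {Q ∈ PD | ∫ ω, Xstar ω ∂Q = sInf {r | ∃ Q' ∈ PD, r = ∫ ω, Xstar ω ∂Q'}})
    (hXRD : XRD = {Q ∈ RD | ∫ ω, Xstar ω ∂Q = sInf {r | ∃ Q' ∈ RD, r = ∫ ω, Xstar ω ∂Q'}}) :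
    Dstar ∩ R =
      {Q | ∃ Q₁ ∈ XPD, ∃ Q₂ ∈ XRD,
        Q = (ENNReal.ofReal (1 / (1 + Rstar)) • Q₁ +
          ENNReal.ofReal (Rstar / (1 + Rstar)) • Q₂ : Measure Ω)} ∩ R := by
  subst hDstar hR hXPD hXRD
  -- basic positivity facts
  have h1R : (0:ℝ) < 1 + Rstar := by linarith
  have ha : (0:ℝ) < 1 / (1 + Rstar) := by positivity
  have hb : (0:ℝ) < Rstar / (1 + Rstar) := by positivity
  set p := sInf {r | ∃ Q' ∈ PD, r = ∫ ω, Xstar ω ∂Q'} with hp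
  set rr := sInf {r | ∃ Q' ∈ RD, r = ∫ ω, Xstar ω ∂Q'} with hrr
  -- extract p / (-rr) = Rstar
  have hval : p / (-rr) = Rstar := by
    have h := (hRAROC Xstar).symm.trans hXstarVal
    by_cases hc : 0 < p ∧ 0 ≤ rr
    · rw [if_pos hc] at h
      exact absurd h.symm (by simp)
    · rw [if_neg hc] at h
      exact_mod_cast h
  have hrr0 : rr ≠ 0 := by
    intro h0
    rw [h0] at hval
    simp at hval
    linarith
  have hp0 : p = Rstar * (-rr) := by
    exact (div_eq_iff (neg_ne_zero.mpr hrr0)).mp hval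
  have hpne : p ≠ 0 := by
    rw [hp0]
    exact mul_ne_zero (ne_of_gt hRstar0) (neg_ne_zero.mpr hrr0)
  -- boundedness from nonzero sInf
  have hbddPD : BddBelow {r | ∃ Q' ∈ PD, r = ∫ ω, Xstar ω ∂Q'} := by
    by_contra hnb
    exact hpne (Real.sInf_of_not_bddBelow hnb)
  have hbddRD : BddBelow {r | ∃ Q' ∈ RD, r = ∫ ω, Xstar ω ∂Q'} := by
    by_contra hnb
    exact hrr0 (Real.sInf_of_not_bddBelow hnb)
  ext Q
  simp only [mem_inter_iff, mem_setOf_eq]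
  constructor
  · rintro ⟨⟨Q₁, hQ₁, Q₂, hQ₂, rfl⟩, hQR⟩
    have hint₁ : Integrable Xstar Q₁ := hAint Q₁ (hPDRD hQ₁) Xstar hXstarA
    have hint₂ : Integrable Xstar Q₂ := hAint Q₂ hQ₂ Xstar hXstarA
    have hE₁ : p ≤ ∫ ω, Xstar ω ∂Q₁ := csInf_le hbddPD ⟨Q₁, hQ₁, rfl⟩
    have hE₂ : rr ≤ ∫ ω, Xstar ω ∂Q₂ := csInf_le hbddRD ⟨Q₂, hQ₂, rfl⟩
    have hle : ∫ ω, Xstar ω ∂(ENNReal.ofReal (1 / (1 + Rstar)) • Q₁ +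
        ENNReal.ofReal (Rstar / (1 + Rstar)) • Q₂ : Measure Ω) ≤ 0 :=
      hQR.2.2 Xstar hXstarA
    have hcomp : ∫ ω, Xstar ω ∂(ENNReal.ofReal (1 / (1 + Rstar)) • Q₁ +
        ENNReal.ofReal (Rstar / (1 + Rstar)) • Q₂ : Measure Ω) =
        (1 / (1 + Rstar)) * ∫ ω, Xstar ω ∂Q₁ +
        (Rstar / (1 + Rstar)) * ∫ ω, Xstar ω ∂Q₂ := by
      rw [integral_add_measure (hint₁.smul_measure ENNReal.ofReal_ne_top)
        (hint₂.smul_measure ENNReal.ofReal_ne_top),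
        integral_smul_measure, integral_smul_measure,
        ENNReal.toReal_ofReal ha.le, ENNReal.toReal_ofReal hb.le]
      simp only [smul_eq_mul]
    rw [hcomp] at hle
    have hzero : (1 / (1 + Rstar)) * p + (Rstar / (1 + Rstar)) * rr = 0 := by
      rw [hp0]; field_simp; ring
    have h1 : 0 ≤ (1 / (1 + Rstar)) * (∫ ω, Xstar ω ∂Q₁ - p) :=
      mul_nonneg ha.le (by linarith)
    have h2 : 0 ≤ (Rstar / (1 + Rstar)) * (∫ ω, Xstar ω ∂Q₂ - rr) :=
      mul_nonneg hb.le (by linarith)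
    have hsum : (1 / (1 + Rstar)) * (∫ ω, Xstar ω ∂Q₁ - p) +
        (Rstar / (1 + Rstar)) * (∫ ω, Xstar ω ∂Q₂ - rr) ≤ 0 := by
      nlinarith [hle, hzero]
    have hE₁' : ∫ ω, Xstar ω ∂Q₁ = p := by
      have hz : (1 / (1 + Rstar)) * (∫ ω, Xstar ω ∂Q₁ - p) = 0 := le_antisymm (by linarith) h1
      rcases mul_eq_zero.mp hz with h | h
      · exact absurd h (ne_of_gt ha)
      · linarith
    have hE₂' : ∫ ω, Xstar ω ∂Q₂ = rr := by
      have hz : (Rstar / (1 + Rstar)) * (∫ ω, Xstar ω ∂Q₂ - rr) = 0 := le_antisymm (by linarith) h2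
      rcases mul_eq_zero.mp hz with h | h
      · exact absurd h (ne_of_gt hb)
      · linarith
    exact ⟨⟨Q₁, ⟨hQ₁, hE₁'⟩, Q₂, ⟨hQ₂, hE₂'⟩, rfl⟩, hQR⟩
  · rintro ⟨⟨Q₁, hQ₁, Q₂, hQ₂, rfl⟩, hQR⟩
    exact ⟨⟨Q₁, hQ₁.1, Q₂, hQ₂.1, rfl⟩, hQR⟩
end

section
/- If (W,F) is jointly Gaussian and u is a law-invariant coherent utility finite on Gaussian variables with u(Gaussian(m,σ²)) = m − γσ, and W is optimal for the agent, then the single-agent NBC price set of F is the singleton {E F − γ·cov(F,W)/√(var W)}. -/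
open MeasureTheory ProbabilityTheory Set

set_option maxHeartbeats 1000000 in
/-- Gaussian single-agent NBC pricing: if `(W,F)` is jointly Gaussian, `u` is a
law-invariant coherent utility with `u(N(m,σ²)) = m − γσ`, and `W` is optimal,
then the single-agent NBC price set of `F` is `{E F − γ·cov(F,W)/√(var W)}`. -/
theorem stmt15 {Ω : Type*} [MeasurableSpace Ω]
    (P : Measure Ω) [IsProbabilityMeasure P]
    (D : Set (Measure Ω)) (hDne : D.Nonempty)
    (hDprob : ∀ Q ∈ D, IsProbabilityMeasure Q)
    (hDac : ∀ Q ∈ D, Q ≪ P)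
    (hDconv : ∀ Q₁ ∈ D, ∀ Q₂ ∈ D, ∀ t : ℝ, 0 ≤ t → t ≤ 1 →
      (ENNReal.ofReal t • Q₁ + ENNReal.ofReal (1 - t) • Q₂ : Measure Ω) ∈ D)
    (hDcomp : ∀ Y : Ω → ℝ, (∀ Q ∈ D, Integrable Y Q) →
      ∃ Q ∈ D, ∀ Q' ∈ D, ∫ ω, Y ω ∂Q ≤ ∫ ω, Y ω ∂Q')
    (A : Set (Ω → ℝ)) (hA0 : (0 : Ω → ℝ) ∈ A) (hAconv : Convex ℝ A)
    (hAint : ∀ Q ∈ D, ∀ X ∈ A, Integrable X Q)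
    (W F : Ω → ℝ) (hWmeas : Measurable W) (hFmeas : Measurable F)
    (hW : ∀ Q ∈ D, Integrable W Q) (hF : ∀ Q ∈ D, Integrable F Q)
    (u : (Ω → ℝ) → ℝ)
    (hu : ∀ Y, u Y = sInf {r | ∃ Q ∈ D, r = ∫ ω, Y ω ∂Q})
    (γ : ℝ) (hγ : 0 < γ)
    (hGaussVal : ∀ (Y : Ω → ℝ) (m σ : ℝ), 0 ≤ σ →
      P.map Y = gaussianReal m (Real.toNNReal (σ ^ 2)) → u Y = m - γ * σ)
    (μW μF vW vF c : ℝ) (hvW : 0 < vW)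
    (hpsd : ∀ α β : ℝ, 0 ≤ α ^ 2 * vW + 2 * α * β * c + β ^ 2 * vF)
    (hjointGauss : ∀ α β : ℝ,
      P.map (fun ω => α * W ω + β * F ω) =
        gaussianReal (α * μW + β * μF)
          (Real.toNNReal (α ^ 2 * vW + 2 * α * β * c + β ^ 2 * vF)))
    (hWopt : ∀ X ∈ A, u (fun ω => W ω + X ω) ≤ u W) :
    {x : ℝ | IsGreatest
        {r | ∃ X ∈ A, ∃ h : ℝ, r = u (fun ω => W ω + X ω + h * (F ω - x))}
        (u W)} =
      {μF - γ * c / Real.sqrt vW} := by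
  have hsWpos : 0 < Real.sqrt vW := Real.sqrt_pos.mpr hvW
  have hsne : Real.sqrt vW ≠ 0 := ne_of_gt hsWpos
  have hss : Real.sqrt vW * Real.sqrt vW = vW := Real.mul_self_sqrt hvW.le
  have hq : ∀ t : ℝ, 0 ≤ vW + 2 * t * c + t ^ 2 * vF := by
    intro t; nlinarith [hpsd 1 t]
  have hc2 : c ^ 2 ≤ vW * vF := by
    nlinarith [hpsd (-c) vW, hvW]
  -- the utility is the least expectation
  have hU : ∀ Y : Ω → ℝ, (∀ Q ∈ D, Integrable Y Q) →
      IsLeast {r | ∃ Q ∈ D, r = ∫ ω, Y ω ∂Q} (u Y) := by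
    intro Y hY
    obtain ⟨Q₀, hQ₀D, hQ₀min⟩ := hDcomp Y hY
    have hL : IsLeast {r | ∃ Q ∈ D, r = ∫ ω, Y ω ∂Q} (∫ ω, Y ω ∂Q₀) :=
      ⟨⟨Q₀, hQ₀D, rfl⟩, by rintro r ⟨Q, hQ, rfl⟩; exact hQ₀min Q hQ⟩
    rw [hu Y, hL.csInf_eq]
    exact hL
  -- gaussian law of `W + t•F`
  have hmapWF : ∀ t : ℝ, P.map (fun ω => W ω + t * F ω) =
      gaussianReal (μW + t * μF) (Real.toNNReal (vW + 2 * t * c + t ^ 2 * vF)) := by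
    intro t
    simpa only [one_mul, one_pow, mul_one] using hjointGauss 1 t
  -- value of u on the gaussian family
  have hval : ∀ t x : ℝ, u (fun ω => W ω + t * (F ω - x)) =
      μW + t * μF - t * x - γ * Real.sqrt (vW + 2 * t * c + t ^ 2 * vF) := by
    intro t x
    have hmeas : Measurable fun ω => W ω + t * F ω := hWmeas.add (hFmeas.const_mul t)
    have h1 : (fun ω => W ω + t * (F ω - x)) =
        (fun y : ℝ => y + -(t * x)) ∘ fun ω => W ω + t * F ω := by
      funext ω; simp [Function.comp]; ring
    have hmap : P.map (fun ω => W ω + t * (F ω - x)) =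
        gaussianReal (μW + t * μF - t * x)
          (Real.toNNReal (vW + 2 * t * c + t ^ 2 * vF)) := by
      rw [h1, ← Measure.map_map (measurable_add_const (-(t * x))) hmeas, hmapWF t,
        gaussianReal_map_add_const]
      norm_num [sub_eq_add_neg]
    exact hGaussVal _ (μW + t * μF - t * x)
      (Real.sqrt (vW + 2 * t * c + t ^ 2 * vF)) (Real.sqrt_nonneg _)
      (by rw [Real.sq_sqrt (hq t)]; exact hmap)
  have huW : u W = μW - γ * Real.sqrt vW := by
    have h := hval 0 0
    norm_num at h
    exact h
  -- quadratic bound near 0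
  have key2 : ∀ t : ℝ, |t| ≤ vW / (2 * (|c| + 1)) →
      Real.sqrt vW * Real.sqrt (vW + 2 * t * c + t ^ 2 * vF) - (t * c + vW) ≤
        2 * (vW * vF - c ^ 2) / vW * t ^ 2 := by
    intro t ht
    have hB0 : 0 ≤ Real.sqrt vW * Real.sqrt (vW + 2 * t * c + t ^ 2 * vF) :=
      mul_nonneg (Real.sqrt_nonneg _) (Real.sqrt_nonneg _)
    have hB2 : (Real.sqrt vW * Real.sqrt (vW + 2 * t * c + t ^ 2 * vF)) ^ 2 =
        vW * (vW + 2 * t * c + t ^ 2 * vF) := by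
      rw [mul_pow, Real.sq_sqrt hvW.le, Real.sq_sqrt (hq t)]
    have htc : |t * c| ≤ vW / 2 := by
      rw [abs_mul]
      calc |t| * |c| ≤ vW / (2 * (|c| + 1)) * |c| :=
            mul_le_mul_of_nonneg_right ht (abs_nonneg c)
        _ ≤ vW / 2 := by
            rw [div_mul_eq_mul_div, div_le_div_iff₀ (by positivity) (by norm_num)]
            nlinarith [abs_nonneg c, hvW.le]
    have hA : vW / 2 ≤ t * c + vW := by
      have := neg_abs_le (t * c); linarith
    set B := Real.sqrt vW * Real.sqrt (vW + 2 * t * c + t ^ 2 * vF) with hB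
    rcases le_or_gt B (t * c + vW) with hle | hlt
    · have h0 : 0 ≤ 2 * (vW * vF - c ^ 2) / vW * t ^ 2 :=
        mul_nonneg (div_nonneg (by nlinarith) hvW.le) (sq_nonneg t)
      linarith
    · have h1 : B ^ 2 - (t * c + vW) ^ 2 = t ^ 2 * (vW * vF - c ^ 2) := by
        rw [hB2]; ring
      rw [div_mul_eq_mul_div, le_div_iff₀ hvW]
      nlinarith [mul_nonneg (sub_nonneg.mpr hlt.le)
          (show (0:ℝ) ≤ B + (t * c + vW) - vW by linarith),
        mul_nonneg (sq_nonneg t) (show (0:ℝ) ≤ vW * vF - c ^ 2 by nlinarith)]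
  -- the main upper bound at the candidate price
  have main : ∀ X ∈ A, ∀ h : ℝ,
      u (fun ω => W ω + X ω + h * (F ω - (μF - γ * c / Real.sqrt vW))) ≤ u W := by
    intro X hXA h
    obtain ⟨xs, hxs⟩ : ∃ y : ℝ, y = μF - γ * c / Real.sqrt vW := ⟨_, rfl⟩
    rw [← hxs]
    by_contra hcon
    push_neg at hcon
    obtain ⟨ε, hε⟩ : ∃ y : ℝ, y = u (fun ω => W ω + X ω + h * (F ω - xs)) - u W := ⟨_, rfl⟩
    have hεpos : 0 < ε := by rw [hε]; linarith
    obtain ⟨K, hK⟩ : ∃ y : ℝ, y = 2 * (vW * vF - c ^ 2) / vW := ⟨_, rfl⟩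
    have key2' : ∀ t : ℝ, |t| ≤ vW / (2 * (|c| + 1)) →
        Real.sqrt vW * Real.sqrt (vW + 2 * t * c + t ^ 2 * vF) - (t * c + vW) ≤
          K * t ^ 2 := by
      intro t ht
      rw [hK]; exact key2 t ht
    have hKnn : 0 ≤ K := by rw [hK]; exact div_nonneg (by nlinarith) hvW.le
    obtain ⟨t₁, ht₁⟩ : ∃ y : ℝ, y = vW / (2 * (|c| + 1)) := ⟨_, rfl⟩
    have ht₁pos : 0 < t₁ := by rw [ht₁]; positivity
    have hden : 0 < 4 * γ * K * h ^ 2 + 1 := by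
      nlinarith [mul_nonneg (mul_nonneg (by linarith : (0:ℝ) ≤ 4 * γ) hKnn) (sq_nonneg h)]
    obtain ⟨l, hl⟩ : ∃ y : ℝ, y = min (1/2 : ℝ)
        (min (t₁ / (2 * (|h| + 1))) (ε * Real.sqrt vW / (4 * γ * K * h ^ 2 + 1))) := ⟨_, rfl⟩
    have hlpos : 0 < l := by
      rw [hl]
      apply lt_min (by norm_num)
      exact lt_min (by positivity) (by positivity)
    have hl2 : l ≤ 1/2 := by rw [hl]; exact min_le_left _ _
    have h1l : (0:ℝ) < 1 - l := by linarith
    obtain ⟨τ, hτ⟩ : ∃ y : ℝ, y = -(l * h) / (1 - l) := ⟨_, rfl⟩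
    have hlh : l ≤ t₁ / (2 * (|h| + 1)) := by
      rw [hl]; exact le_trans (min_le_right _ _) (min_le_left _ _)
    have hl3 : l ≤ ε * Real.sqrt vW / (4 * γ * K * h ^ 2 + 1) := by
      rw [hl]; exact le_trans (min_le_right _ _) (min_le_right _ _)
    have hτabs : |τ| ≤ t₁ := by
      rw [hτ, abs_div, abs_neg, abs_mul, abs_of_pos hlpos, abs_of_pos h1l,
        div_le_iff₀ h1l]
      have h2 : l * |h| ≤ t₁ / (2 * (|h| + 1)) * |h| :=
        mul_le_mul_of_nonneg_right hlh (abs_nonneg h)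
      have h3 : t₁ / (2 * (|h| + 1)) * |h| ≤ t₁ / 2 := by
        rw [div_mul_eq_mul_div, div_le_div_iff₀ (by positivity) (by norm_num)]
        nlinarith [abs_nonneg h, ht₁pos.le]
      have h4 : t₁ * l ≤ t₁ * (1/2) := mul_le_mul_of_nonneg_left hl2 ht₁pos.le
      linarith
    -- integrability
    have intf : ∀ Q ∈ D, Integrable (fun ω => W ω + τ * (F ω - xs)) Q := by
      intro Q hQ
      haveI := hDprob Q hQ
      exact (hW Q hQ).add (((hF Q hQ).sub (integrable_const xs)).const_mul τ)
    have intg : ∀ Q ∈ D, Integrable (fun ω => W ω + X ω + h * (F ω - xs)) Q := by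
      intro Q hQ
      haveI := hDprob Q hQ
      exact ((hW Q hQ).add (hAint Q hQ X hXA)).add
        (((hF Q hQ).sub (integrable_const xs)).const_mul h)
    have intWlX : ∀ Q ∈ D, Integrable (fun ω => W ω + l * X ω) Q := fun Q hQ =>
      (hW Q hQ).add ((hAint Q hQ X hXA).const_mul l)
    obtain ⟨Qs, hQsD, hQseq⟩ := (hU _ intWlX).1
    haveI := hDprob Qs hQsD
    have hτeq : (1 - l) * τ + l * h = 0 := by
      rw [hτ]; field_simp; ring
    have hfun : (fun ω => W ω + l * X ω) =
        fun ω => (1 - l) * (W ω + τ * (F ω - xs)) + l * (W ω + X ω + h * (F ω - xs)) := by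
      funext ω
      linear_combination (xs - F ω) * hτeq
    have hint1 := intf Qs hQsD
    have hint2 := intg Qs hQsD
    have hsplit : ∫ ω, (W ω + l * X ω) ∂Qs =
        (1 - l) * ∫ ω, (W ω + τ * (F ω - xs)) ∂Qs +
          l * ∫ ω, (W ω + X ω + h * (F ω - xs)) ∂Qs := by
      have e3 : ∫ ω, (W ω + l * X ω) ∂Qs =
          ∫ ω, ((1 - l) * (W ω + τ * (F ω - xs)) +
            l * (W ω + X ω + h * (F ω - xs))) ∂Qs := by rw [hfun]
      have eadd : ∫ ω, ((1 - l) * (W ω + τ * (F ω - xs)) +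
            l * (W ω + X ω + h * (F ω - xs))) ∂Qs =
          (∫ ω, ((1 - l) * (W ω + τ * (F ω - xs))) ∂Qs) +
            ∫ ω, (l * (W ω + X ω + h * (F ω - xs))) ∂Qs :=
        integral_add (hint1.const_mul (1 - l)) (hint2.const_mul l)
      have ef : ∫ ω, ((1 - l) * (W ω + τ * (F ω - xs))) ∂Qs =
          (1 - l) * ∫ ω, (W ω + τ * (F ω - xs)) ∂Qs :=
        integral_const_mul (1 - l) fun ω => W ω + τ * (F ω - xs)
      have eg : ∫ ω, (l * (W ω + X ω + h * (F ω - xs))) ∂Qs =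
          l * ∫ ω, (W ω + X ω + h * (F ω - xs)) ∂Qs :=
        integral_const_mul l fun ω => W ω + X ω + h * (F ω - xs)
      rw [e3, eadd, ef, eg]
    have hle1 : u (fun ω => W ω + τ * (F ω - xs)) ≤ ∫ ω, (W ω + τ * (F ω - xs)) ∂Qs :=
      (hU _ intf).2 ⟨Qs, hQsD, rfl⟩
    have hle2 : u (fun ω => W ω + X ω + h * (F ω - xs)) ≤
        ∫ ω, (W ω + X ω + h * (F ω - xs)) ∂Qs :=
      (hU _ intg).2 ⟨Qs, hQsD, rfl⟩
    have hF2 : (1 - l) * u (fun ω => W ω + τ * (F ω - xs)) +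
        l * u (fun ω => W ω + X ω + h * (F ω - xs)) ≤ u (fun ω => W ω + l * X ω) := by
      rw [hQseq, hsplit]
      have e1 := mul_le_mul_of_nonneg_left hle1 h1l.le
      have e2 := mul_le_mul_of_nonneg_left hle2 hlpos.le
      linarith
    have hF1 : u (fun ω => W ω + l * X ω) ≤ u W := by
      have hmem : l • X ∈ A := by
        have := hAconv hXA hA0 hlpos.le h1l.le (by ring)
        simpa using this
      have := hWopt (l • X) hmem
      simpa [Pi.smul_apply, smul_eq_mul] using this
    have hug : u (fun ω => W ω + X ω + h * (F ω - xs)) = u W + ε := by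
      rw [hε]; ring
    have hA1 : l * ε ≤ (1 - l) * (u W - u (fun ω => W ω + τ * (F ω - xs))) := by
      rw [hug] at hF2
      linarith
    have hγc : γ * c = (μF - xs) * Real.sqrt vW := by
      rw [hxs]; field_simp; ring
    have hdiff : Real.sqrt vW * (u W - u (fun ω => W ω + τ * (F ω - xs))) =
        γ * (Real.sqrt vW * Real.sqrt (vW + 2 * τ * c + τ ^ 2 * vF) - (τ * c + vW)) := by
      rw [hval τ xs, huW]
      linear_combination (-γ) * hss + τ * hγc
    have hkey := key2' τ (by rw [← ht₁]; exact hτabs)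
    have hstep : l * ε * Real.sqrt vW ≤ (1 - l) * (γ * (K * τ ^ 2)) := by
      have h2 : Real.sqrt vW * (u W - u (fun ω => W ω + τ * (F ω - xs))) ≤ γ * (K * τ ^ 2) := by
        rw [hdiff]
        have := mul_le_mul_of_nonneg_left hkey hγ.le
        linarith
      have s1 := mul_le_mul_of_nonneg_left hA1 hsWpos.le
      have s2 := mul_le_mul_of_nonneg_left h2 h1l.le
      nlinarith [s1, s2]
    have hτsq : τ ^ 2 * (1 - l) ^ 2 = l ^ 2 * h ^ 2 := by
      rw [hτ]; field_simp
    have hBC : (1 - l) * ((1 - l) * (γ * (K * τ ^ 2))) = γ * K * (l ^ 2 * h ^ 2) := by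
      rw [← hτsq]; ring
    have hE : 0 < ε * Real.sqrt vW := mul_pos hεpos hsWpos
    have hM : 0 ≤ γ * K * h ^ 2 := mul_nonneg (mul_nonneg hγ.le hKnn) (sq_nonneg h)
    have hmain2 : l * (ε * Real.sqrt vW) ≤ 2 * (γ * K * h ^ 2) * l * l := by
      have s1 := mul_le_mul_of_nonneg_left hstep h1l.le
      rw [hBC] at s1
      have t3 : 0 ≤ l * (ε * Real.sqrt vW) * (1 - 2 * l) :=
        mul_nonneg (mul_nonneg hlpos.le hE.le) (by linarith)
      nlinarith [s1, t3]
    have hl3' : l * (4 * γ * K * h ^ 2 + 1) ≤ ε * Real.sqrt vW := by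
      rw [← le_div_iff₀ hden]; exact hl3
    have c1 : ε * Real.sqrt vW ≤ 2 * (γ * K * h ^ 2) * l := by
      have h' : l * (ε * Real.sqrt vW) ≤ l * (2 * (γ * K * h ^ 2) * l) := by
        linarith [hmain2]
      exact le_of_mul_le_mul_left h' hlpos
    have c2 : 0 ≤ γ * K * h ^ 2 * l := mul_nonneg hM hlpos.le
    linarith [hl3', c1, c2, hlpos, hE]
  -- derivative of the gaussian value function
  have hderiv : ∀ x : ℝ, HasDerivAt
      (fun t : ℝ => μW + t * μF - t * x - γ * Real.sqrt (vW + 2 * t * c + t ^ 2 * vF))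
      (μF - x - γ * (c / Real.sqrt vW)) 0 := by
    intro x
    have hin : HasDerivAt (fun t : ℝ => vW + 2 * t * c + t ^ 2 * vF) (2 * c) 0 := by
      have h1 : HasDerivAt (fun t : ℝ => vW + 2 * t * c + t ^ 2 * vF)
          (0 + 2 * 1 * c + (2:ℕ) * (0:ℝ) ^ (2 - 1) * vF) 0 :=
        (((hasDerivAt_const (0:ℝ) vW).add
          (((hasDerivAt_id (0:ℝ)).const_mul 2).mul_const c))).add
          ((hasDerivAt_pow 2 (0:ℝ)).mul_const vF)
      convert h1 using 1
      norm_num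
    have hsq : HasDerivAt Real.sqrt (1 / (2 * Real.sqrt vW))
        (vW + 2 * (0:ℝ) * c + (0:ℝ) ^ 2 * vF) := by
      rw [show vW + 2 * (0:ℝ) * c + (0:ℝ) ^ 2 * vF = vW by ring]
      exact Real.hasDerivAt_sqrt hvW.ne'
    have hcomp : HasDerivAt (fun t : ℝ => Real.sqrt (vW + 2 * t * c + t ^ 2 * vF))
        (1 / (2 * Real.sqrt vW) * (2 * c)) 0 := hsq.comp 0 hin
    have ha : HasDerivAt (fun t : ℝ => μW + t * μF - t * x) (μF - x) 0 := by
      have h1 : HasDerivAt (fun t : ℝ => μW + t * μF - t * x) (0 + 1 * μF - 1 * x) 0 :=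
        (((hasDerivAt_const (0:ℝ) μW).add ((hasDerivAt_id (0:ℝ)).mul_const μF))).sub
          ((hasDerivAt_id (0:ℝ)).mul_const x)
      convert h1 using 1
      ring
    have := ha.sub (hcomp.const_mul γ)
    convert this using 1
    · rfl
    · rfl
    · rfl
    · ring
  -- assemble
  ext x
  simp only [mem_setOf_eq, mem_singleton_iff]
  constructor
  · intro hx
    have hub : ∀ t : ℝ,
        μW + t * μF - t * x - γ * Real.sqrt (vW + 2 * t * c + t ^ 2 * vF) ≤ u W := by
      intro t
      have hmem : u (fun ω => W ω + (0 : Ω → ℝ) ω + t * (F ω - x)) ≤ u W :=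
        hx.2 ⟨0, hA0, t, rfl⟩
      have hfe : (fun ω => W ω + (0 : Ω → ℝ) ω + t * (F ω - x)) =
          fun ω => W ω + t * (F ω - x) := by
        funext ω; simp
      rw [hfe, hval t x] at hmem
      exact hmem
    have hmax : IsLocalMax
        (fun t : ℝ => μW + t * μF - t * x - γ * Real.sqrt (vW + 2 * t * c + t ^ 2 * vF)) 0 := by
      apply Filter.Eventually.of_forall
      intro t
      have h0 : u W = μW + (0:ℝ) * μF - (0:ℝ) * x -
          γ * Real.sqrt (vW + 2 * (0:ℝ) * c + (0:ℝ) ^ 2 * vF) := by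
        rw [huW]; norm_num
      exact (hub t).trans h0.le
    have hd0 := hmax.hasDerivAt_eq_zero (hderiv x)
    rw [mul_div_assoc]
    linarith [hd0]
  · rintro rfl
    constructor
    · refine ⟨0, hA0, 0, ?_⟩
      have hfe : (fun ω => W ω + (0 : Ω → ℝ) ω +
          (0:ℝ) * (F ω - (μF - γ * c / Real.sqrt vW))) = W := by
        funext ω; simp
      rw [hfe]
    · rintro r ⟨X, hXA, h, rfl⟩
      exact main X hXA h
end
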